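/- arXiv:2411.18981 — 3 statements merged into one kernel-verified Lean document; each statement's English description precedes it below -/
import Mathlib

section
/- Let F be a field and let G = (V, E) be a finite simple undirected graph with V = {1,…,n}, n ≥ 2, and maximum degree Δ. For each vertex u, fix an injection n_u from the neighborhood of u into {1,…,Δ}. Define the n-variate polynomial f_G := Σ_{v=1}^n x_v^{Δ+1} + Σ_{{u,v}∈E} x_u^{n_u(v)} · x_v^{n_v(u)}, which has individual degree Δ+1. Then for every partition {1,…,n} = A ⊔ B with A and B both nonempty, the rank of the Nisan matrix M_A(f_G) equals 2 + c_G(A,B), where c_G(A,B) is the number of edges of G with one endpoint in A and the other in B. -/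
open MvPolynomial

/-- `f` has individual degree at most `d`: every variable appears with exponent at most `d`
in every monomial of `f`. -/
def IndivDegLE {F : Type*} [CommSemiring F] {V : Type*} (f : MvPolynomial V F) (d : ℕ) : Prop :=
  ∀ m ∈ f.support, ∀ i : V, m i ≤ d

/-- The Nisan matrix of `f` with respect to the set `T` of variables, where exponents
range over `{0, …, d}`. -/
noncomputable def nisanMatrix {F : Type*} [Field F] {V : Type*} [Fintype V] [DecidableEq V]
    (d : ℕ) (f : MvPolynomial V F) (T : Finset V) :
    Matrix ({x : V // x ∈ T} → Fin (d + 1)) ({x : V // x ∉ T} → Fin (d + 1)) F :=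
  Matrix.of fun a b => MvPolynomial.coeff
    (Finsupp.equivFunOnFinite.symm fun i =>
      if h : i ∈ T then (a ⟨i, h⟩ : ℕ) else (b ⟨i, h⟩ : ℕ)) f

/-- Ordered product `L 0 * L 1 * ⋯ * L (k-1)` of matrices of varying dimensions. -/
def matProdUpTo {R : Type*} [CommSemiring R] (ws : ℕ → ℕ)
    (L : (i : ℕ) → Matrix (Fin (ws i)) (Fin (ws (i + 1))) R) :
    (k : ℕ) → Matrix (Fin (ws 0)) (Fin (ws k)) R
  | 0 => 1
  | k + 1 => matProdUpTo ws L k * L k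

/-- `f` has an ROABP of width `w` in the order `σ`: there are widths
`ws 0 = ws n = 1`, `1 ≤ ws i ≤ w` for `0 < i < n`, and coefficient matrices
`A i j ∈ F^{ws i × ws (i+1)}` such that `f` is the `(1,1)` entry of the ordered product
of the layer matrices `Σ_j A i j • x_{σ(i)}^j`. -/
def HasROABP {F : Type*} [Field F] {n : ℕ} (d : ℕ) (f : MvPolynomial (Fin n) F)
    (σ : Equiv.Perm (Fin n)) (w : ℕ) : Prop :=
  ∃ (ws : ℕ → ℕ) (A : (i : Fin n) → Fin (d + 1) →
      Matrix (Fin (ws i.val)) (Fin (ws (i.val + 1))) F),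
    ws 0 = 1 ∧ ws n = 1 ∧ (∀ i : ℕ, 0 < i → i < n → 1 ≤ ws i ∧ ws i ≤ w) ∧
    ∀ (p : Fin (ws 0)) (q : Fin (ws n)),
      f = matProdUpTo ws
        (fun i => if h : i < n then
            Matrix.of (fun p' q' => ∑ j : Fin (d + 1),
              MvPolynomial.C (A ⟨i, h⟩ j p' q') * MvPolynomial.X (σ ⟨i, h⟩) ^ (j : ℕ))
          else 0) n p q

/-- `T` is a prefix of the order `σ`, i.e. `T = {σ(1), …, σ(i)}` for some `i ∈ {1, …, n}`
(0-indexed: the image under `σ` of the first `i` positions). -/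
def IsPrefixOf {n : ℕ} (σ : Equiv.Perm (Fin n)) (T : Finset (Fin n)) : Prop :=
  ∃ i : ℕ, 1 ≤ i ∧ i ≤ n ∧
    T = (Finset.univ.filter fun l : Fin n => (l : ℕ) < i).image (fun l => σ l)

/-- The `(1,1)` entry of the ordered product of the layer matrices of a width-`w` ROABP
in the order `σ`, with coefficient matrices `A`. -/
noncomputable def roabpPoly {F : Type*} [Field F] {n : ℕ} (d w : ℕ) (hw : 0 < w)
    (σ : Equiv.Perm (Fin n)) (A : Fin n → Fin (d + 1) → Matrix (Fin w) (Fin w) F) :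
    MvPolynomial (Fin n) F :=
  (((List.finRange n).map fun i => Matrix.of fun p q =>
      ∑ j : Fin (d + 1), MvPolynomial.C (A i j p q) * MvPolynomial.X (σ i) ^ (j : ℕ)).prod)
    ⟨0, hw⟩ ⟨0, hw⟩

open Matrix Module

namespace NisanAux

variable {F : Type*} [Field F]

lemma rank_add_le {m n : Type*} [Fintype n] [Fintype m] (A B : Matrix m n F) :
    (A + B).rank ≤ A.rank + B.rank := by
  classical
  rw [Matrix.rank, Matrix.rank, Matrix.rank, Matrix.mulVecLin_add]
  have h : LinearMap.range (A.mulVecLin + B.mulVecLin) ≤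
      LinearMap.range A.mulVecLin ⊔ LinearMap.range B.mulVecLin := by
    rintro x ⟨y, rfl⟩
    exact Submodule.mem_sup.2 ⟨_, ⟨y, rfl⟩, _, ⟨y, rfl⟩, rfl⟩
  exact (Submodule.finrank_mono h).trans
    (Submodule.finrank_add_le_finrank_add_finrank _ _)

lemma rank_vecMulVec_le {m n : Type*} [Fintype n] [Fintype m] (w : m → F) (v : n → F) :
    (Matrix.vecMulVec w v).rank ≤ 1 := by
  classical
  rw [Matrix.vecMulVec_eq (Fin 1)]
  exact le_trans (Matrix.rank_mul_le_left _ _)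
    (le_trans (Matrix.rank_le_card_width _) (by simp))

lemma rank_sum_le {ι m n : Type*} [Fintype n] [Fintype m] (s : Finset ι)
    (f : ι → Matrix m n F) (h1 : ∀ x ∈ s, (f x).rank ≤ 1) :
    (∑ x ∈ s, f x).rank ≤ s.card := by
  classical
  induction s using Finset.induction_on with
  | empty => simp
  | insert _ _ hx ih =>
    rename_i a s
    rw [Finset.sum_insert hx, Finset.card_insert_of_notMem hx]
    exact le_trans (rank_add_le _ _)
      (by
        have := h1 a (Finset.mem_insert_self a s)
        have := ih (fun x hx => h1 x (Finset.mem_insert_of_mem hx))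
        omega)

lemma rank_submatrix_le' {ι κ m n : Type*} [Fintype n] [Fintype m] [Fintype ι] [Fintype κ]
    [DecidableEq m] [DecidableEq n]
    (M : Matrix m n F) (f : ι → m) (g : κ → n) :
    (M.submatrix f g).rank ≤ M.rank := by
  classical
  have : M.submatrix f g =
      (Matrix.of fun i r => if r = f i then (1:F) else 0) * M *
      (Matrix.of fun c j => if c = g j then (1:F) else 0) := by
    ext i j
    simp only [Matrix.mul_apply, Matrix.submatrix_apply, Matrix.of_apply]
    simp only [ite_mul, one_mul, zero_mul, Finset.sum_ite_eq', Finset.mem_univ, if_true,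
      mul_ite, mul_one, mul_zero]
  rw [this]
  exact le_trans (Matrix.rank_mul_le_left _ _) (Matrix.rank_mul_le_right _ _)

end NisanAux
open Matrix Module MvPolynomial

namespace NisanAux2

variable {n Δ : ℕ} (A : Finset (Fin n))

open Fin.NatCast in
/-- row vector with single possibly-nonzero entry `k` at `v` -/
def rowOf (Δ : ℕ) (v : Fin n) (k : ℕ) : {x : Fin n // x ∈ A} → Fin (Δ + 1 + 1) :=
  fun x => if v = (x : Fin n) then (k : Fin (Δ + 1 + 1)) else 0

open Fin.NatCast in
def colOf (Δ : ℕ) (v : Fin n) (k : ℕ) : {x : Fin n // x ∉ A} → Fin (Δ + 1 + 1) :=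
  fun x => if v = (x : Fin n) then (k : Fin (Δ + 1 + 1)) else 0

noncomputable def mon (a : {x : Fin n // x ∈ A} → Fin (Δ + 1 + 1))
    (b : {x : Fin n // x ∉ A} → Fin (Δ + 1 + 1)) : Fin n →₀ ℕ :=
  Finsupp.equivFunOnFinite.symm fun i => if h : i ∈ A then (a ⟨i, h⟩ : ℕ) else (b ⟨i, h⟩ : ℕ)

lemma mon_apply (a : {x : Fin n // x ∈ A} → Fin (Δ + 1 + 1))
    (b : {x : Fin n // x ∉ A} → Fin (Δ + 1 + 1)) (i : Fin n) :
    mon A a b i = if h : i ∈ A then (a ⟨i, h⟩ : ℕ) else (b ⟨i, h⟩ : ℕ) := rfl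

lemma rowOf_val {v : Fin n} {k : ℕ} (hk : k < Δ + 1 + 1) (x) :
    ((rowOf A Δ v k x : Fin (Δ + 1 + 1)) : ℕ) = if v = (x : Fin n) then k else 0 := by
  unfold rowOf; split
  · exact Fin.val_cast_of_lt hk
  · rfl

lemma colOf_val {v : Fin n} {k : ℕ} (hk : k < Δ + 1 + 1) (x) :
    ((colOf A Δ v k x : Fin (Δ + 1 + 1)) : ℕ) = if v = (x : Fin n) then k else 0 := by
  unfold colOf; split
  · exact Fin.val_cast_of_lt hk
  · rfl

lemma rowOf_zero (v : Fin n) : rowOf A Δ v 0 = 0 := by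
  funext x; unfold rowOf; split <;> simp

lemma colOf_zero (v : Fin n) : colOf A Δ v 0 = 0 := by
  funext x; unfold colOf; split <;> simp

lemma rowOf_ne_zero {v : Fin n} (hv : v ∈ A) {k : ℕ} (hk : k < Δ + 1 + 1) (hk0 : k ≠ 0) :
    rowOf A Δ v k ≠ 0 := by
  intro h
  have := congrArg (fun f => ((f ⟨v, hv⟩ : Fin (Δ + 1 + 1)) : ℕ)) h
  simp only [rowOf_val A hk, if_pos rfl] at this
  exact hk0 (by simpa using this)

lemma colOf_ne_zero {v : Fin n} (hv : v ∉ A) {k : ℕ} (hk : k < Δ + 1 + 1) (hk0 : k ≠ 0) :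
    colOf A Δ v k ≠ 0 := by
  intro h
  have := congrArg (fun f => ((f ⟨v, hv⟩ : Fin (Δ + 1 + 1)) : ℕ)) h
  simp only [colOf_val A hk, if_pos rfl] at this
  exact hk0 (by simpa using this)

/-- the master pointwise evaluation -/
lemma mon_row_col_apply {v w : Fin n} (hv : v ∈ A) (hw : w ∉ A) {k l : ℕ}
    (hk : k < Δ + 1 + 1) (hl : l < Δ + 1 + 1) (i : Fin n) :
    mon A (rowOf A Δ v k) (colOf A Δ w l) i =
      if v = i then k else if w = i then l else 0 := by
  rw [mon_apply]
  by_cases hi : i ∈ A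
  · rw [dif_pos hi, rowOf_val A hk]
    rcases eq_or_ne w i with rfl | hwi
    · exact absurd hi hw
    · simp [hwi]
  · rw [dif_neg hi, colOf_val A hl]
    rcases eq_or_ne v i with rfl | hvi
    · exact absurd hv hi
    · simp [hvi]

lemma pair_eq_iff {u v : Fin n} (hu : u ∈ A) (hv : v ∉ A) {k l : ℕ}
    (hk : k < Δ + 1 + 1) (hl : l < Δ + 1 + 1)
    (a : {x : Fin n // x ∈ A} → Fin (Δ + 1 + 1))
    (b : {x : Fin n // x ∉ A} → Fin (Δ + 1 + 1)) :
    (Finsupp.single u k + Finsupp.single v l = mon A a b) ↔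
      (a = rowOf A Δ u k ∧ b = colOf A Δ v l) := by
  constructor
  · intro h
    constructor
    · funext x
      have hx := DFunLike.congr_fun h (x : Fin n)
      rw [Finsupp.add_apply, Finsupp.single_apply, Finsupp.single_apply,
        mon_apply, dif_pos x.2] at hx
      have hvx : ¬ (v = (x : Fin n)) := fun hh => hv (hh ▸ x.2)
      rw [if_neg hvx, add_zero, Subtype.coe_eta] at hx
      refine Fin.val_injective ?_
      rw [rowOf_val A hk]
      exact hx.symm
    · funext x
      have hx := DFunLike.congr_fun h (x : Fin n)
      rw [Finsupp.add_apply, Finsupp.single_apply, Finsupp.single_apply,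
        mon_apply, dif_neg x.2] at hx
      have hux : ¬ (u = (x : Fin n)) := fun hh => x.2 (hh ▸ hu)
      rw [if_neg hux, zero_add, Subtype.coe_eta] at hx
      refine Fin.val_injective ?_
      rw [colOf_val A hl]
      exact hx.symm
  · rintro ⟨rfl, rfl⟩
    ext i
    rw [Finsupp.add_apply, Finsupp.single_apply, Finsupp.single_apply,
      mon_row_col_apply A hu hv hk hl]
    rcases eq_or_ne u i with rfl | hui
    · rw [if_pos rfl, if_pos rfl, if_neg (fun h : v = u => hv (by rw [h]; exact hu)), add_zero]
    · rw [if_neg hui, if_neg hui, zero_add]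

lemma single_eq_mon_rc_iff {v w v' : Fin n} {e : ℕ} (he : 1 ≤ e)
    (hv : v ∈ A) (hw : w ∉ A) {k l : ℕ} (hk : k < Δ + 1 + 1) (hl : l < Δ + 1 + 1) :
    (Finsupp.single v' e = mon A (rowOf A Δ v k) (colOf A Δ w l)) ↔
      ((v' = v ∧ k = e ∧ l = 0) ∨ (v' = w ∧ k = 0 ∧ l = e)) := by
  have hvw : v ≠ w := fun h => hw (h ▸ hv)
  constructor
  · intro h
    have hp : ∀ i, (if v' = i then e else 0) =
        if v = i then k else if w = i then l else 0 := fun i => by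
      have := DFunLike.congr_fun h i
      rwa [Finsupp.single_apply, mon_row_col_apply A hv hw hk hl] at this
    rcases eq_or_ne v' v with rfl | h1
    · left
      refine ⟨rfl, ?_, ?_⟩
      · have := hp v'; simpa using this.symm
      · have := hp w
        rw [if_neg hvw, if_neg hvw, if_pos rfl] at this
        exact this.symm
    · rcases eq_or_ne v' w with rfl | h2
      · right
        refine ⟨rfl, ?_, ?_⟩
        · have := hp v
          rw [if_neg h1, if_pos rfl] at this
          exact this.symm
        · have := hp v'
          rw [if_pos rfl, if_neg hvw, if_pos rfl] at this
          exact this.symm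
      · exfalso
        have := hp v'
        rw [if_pos rfl, if_neg (fun hh : v = v' => h1 hh.symm),
          if_neg (fun hh : w = v' => h2 hh.symm)] at this
        omega
  · rintro (⟨rfl, rfl, rfl⟩ | ⟨rfl, rfl, rfl⟩) <;> ext i <;>
      rw [Finsupp.single_apply, mon_row_col_apply A hv hw hk hl] <;>
      split_ifs <;> (try simp_all) <;> omega

lemma pair_eq_mon_rc_iff {u v' v w : Fin n} (huv : u ≠ v') {k' l' : ℕ}
    (hk' : 1 ≤ k') (hl' : 1 ≤ l')
    (hv : v ∈ A) (hw : w ∉ A) {k l : ℕ} (hk : k < Δ + 1 + 1) (hl : l < Δ + 1 + 1) :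
    (Finsupp.single u k' + Finsupp.single v' l' =
        mon A (rowOf A Δ v k) (colOf A Δ w l)) ↔
      ((u = v ∧ v' = w ∧ k = k' ∧ l = l') ∨ (u = w ∧ v' = v ∧ k = l' ∧ l = k')) := by
  have hvw : v ≠ w := fun h => hw (h ▸ hv)
  constructor
  · intro h
    have hp : ∀ i, ((if u = i then k' else 0) + if v' = i then l' else 0) =
        if v = i then k else if w = i then l else 0 := fun i => by
      have := DFunLike.congr_fun h i
      rwa [Finsupp.add_apply, Finsupp.single_apply, Finsupp.single_apply,
        mon_row_col_apply A hv hw hk hl] at this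
    rcases eq_or_ne u v with rfl | h1
    · left
      have hv'w : v' = w := by
        by_contra hne
        have := hp v'
        rw [if_neg huv, if_pos rfl, if_neg (fun hh : u = v' => huv hh),
          if_neg (fun hh : w = v' => hne hh.symm)] at this
        omega
      subst hv'w
      refine ⟨rfl, rfl, ?_, ?_⟩
      · have := hp u
        rw [if_pos rfl, if_neg (fun hh : v' = u => huv hh.symm), if_pos rfl, add_zero] at this
        exact this.symm
      · have := hp v'
        rw [if_neg huv, if_pos rfl, if_neg hvw, if_pos rfl, zero_add] at this
        exact this.symm
    · right
      have hu : u = w := by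
        by_contra hne
        have := hp u
        rw [if_pos rfl, if_neg (fun hh : v' = u => huv hh.symm), add_zero,
          if_neg (fun hh : v = u => h1 hh.symm), if_neg (fun hh : w = u => hne hh.symm)] at this
        omega
      subst hu
      have hv' : v' = v := by
        by_contra hne
        have := hp v'
        rw [if_neg huv, if_pos rfl, zero_add, if_neg (fun hh : v = v' => hne hh.symm),
          if_neg (fun hh : u = v' => huv hh)] at this
        omega
      subst hv'
      refine ⟨rfl, rfl, ?_, ?_⟩
      · have := hp v'
        rw [if_neg huv, if_pos rfl, zero_add, if_pos rfl] at this
        exact this.symm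
      · have := hp u
        rw [if_pos rfl, if_neg (fun hh : v' = u => huv hh.symm), add_zero,
          if_neg (fun hh => hvw hh), if_pos rfl] at this
        exact this.symm
  · rintro (⟨rfl, rfl, rfl, rfl⟩ | ⟨rfl, rfl, rfl, rfl⟩) <;> ext i <;>
      rw [Finsupp.add_apply, Finsupp.single_apply, Finsupp.single_apply,
        mon_row_col_apply A hv hw hk hl] <;>
      split_ifs <;> (try simp_all) <;> omega

variable {F : Type*} [Field F]

lemma ite_or_split {P Q : Prop} [Decidable P] [Decidable Q] (h : ¬(P ∧ Q)) :
    (if P ∨ Q then (1:F) else 0) = (if P then 1 else 0) + (if Q then 1 else 0) := by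
  split_ifs <;> (try simp) <;> tauto

lemma coeff_fG (G : SimpleGraph (Fin n)) [DecidableRel G.Adj] (nb : Fin n → Fin n → ℕ)
    (s : Fin n →₀ ℕ) :
    MvPolynomial.coeff s
      (((∑ v : Fin n, X v ^ (Δ + 1)) + ∑ u : Fin n, ∑ v : Fin n,
        if G.Adj u v ∧ u < v then X u ^ (nb u v) * X v ^ (nb v u) else 0 :
        MvPolynomial (Fin n) F))
    = (∑ v : Fin n, if Finsupp.single v (Δ + 1) = s then (1:F) else 0)
      + ∑ u : Fin n, ∑ v : Fin n, if G.Adj u v ∧ u < v then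
          (if Finsupp.single u (nb u v) + Finsupp.single v (nb v u) = s then (1:F) else 0)
        else 0 := by
  rw [MvPolynomial.coeff_add, MvPolynomial.coeff_sum]
  congr 1
  · exact Finset.sum_congr rfl fun v _ => by rw [MvPolynomial.coeff_X_pow]
  · rw [MvPolynomial.coeff_sum]
    refine Finset.sum_congr rfl fun u _ => ?_
    rw [MvPolynomial.coeff_sum]
    refine Finset.sum_congr rfl fun v _ => ?_
    split
    · rw [X_pow_eq_monomial, X_pow_eq_monomial, monomial_mul, MvPolynomial.coeff_monomial,
        one_mul]
    · simp

lemma master (G : SimpleGraph (Fin n)) [DecidableRel G.Adj] (nb : Fin n → Fin n → ℕ)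
    (hnb_range : ∀ u v, G.Adj u v → 1 ≤ nb u v ∧ nb u v ≤ Δ)
    {v w : Fin n} (hv : v ∈ A) (hw : w ∉ A) {k l : ℕ} (hk : k ≤ Δ + 1) (hl : l ≤ Δ + 1) :
    MvPolynomial.coeff (mon A (rowOf A Δ v k) (colOf A Δ w l))
      (((∑ v : Fin n, X v ^ (Δ + 1)) + ∑ u : Fin n, ∑ v : Fin n,
        if G.Adj u v ∧ u < v then X u ^ (nb u v) * X v ^ (nb v u) else 0 :
        MvPolynomial (Fin n) F))
    = ((if k = Δ + 1 ∧ l = 0 then (1:F) else 0) + (if k = 0 ∧ l = Δ + 1 then (1:F) else 0))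
      + (if G.Adj v w ∧ k = nb v w ∧ l = nb w v then (1:F) else 0) := by
  have hvw : v ≠ w := fun h => hw (h ▸ hv)
  have hk2 : k < Δ + 1 + 1 := by omega
  have hl2 : l < Δ + 1 + 1 := by omega
  rw [coeff_fG]
  congr 1
  · -- the pure-powers part
    have hterm : ∀ v' : Fin n,
        (if Finsupp.single v' (Δ + 1) = mon A (rowOf A Δ v k) (colOf A Δ w l)
            then (1:F) else 0)
        = (if v' = v then (if k = Δ + 1 ∧ l = 0 then (1:F) else 0) else 0)
          + (if v' = w then (if k = 0 ∧ l = Δ + 1 then (1:F) else 0) else 0) := by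
      intro v'
      rw [if_congr (single_eq_mon_rc_iff A (by omega) hv hw hk2 hl2) rfl rfl,
        ite_or_split (by rintro ⟨⟨rfl, -⟩, ⟨rfl, -⟩⟩; exact hvw rfl)]
      congr 1
      · rw [← ite_and]
      · rw [← ite_and]
    rw [Finset.sum_congr rfl fun v' _ => hterm v', Finset.sum_add_distrib,
      Finset.sum_ite_eq' Finset.univ v, Finset.sum_ite_eq' Finset.univ w]
    simp
  · -- the edge part
    have hterm2 : ∀ u v' : Fin n,
        (if G.Adj u v' ∧ u < v' then
            (if Finsupp.single u (nb u v') + Finsupp.single v' (nb v' u) =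
                mon A (rowOf A Δ v k) (colOf A Δ w l) then (1:F) else 0)
          else 0)
        = (if v' = w then (if u = v then
              (if G.Adj v w ∧ v < w ∧ k = nb v w ∧ l = nb w v then (1:F) else 0) else 0) else 0)
          + (if v' = v then (if u = w then
              (if G.Adj v w ∧ w < v ∧ k = nb v w ∧ l = nb w v then (1:F) else 0) else 0) else 0) := by
      intro u v'
      by_cases hE : G.Adj u v' ∧ u < v'
      · have hne : u ≠ v' := ne_of_lt hE.2
        have h1 := hnb_range u v' hE.1
        have h2 := hnb_range v' u hE.1.symm
        rw [if_pos hE, if_congr (pair_eq_mon_rc_iff A hne h1.1 h2.1 hv hw hk2 hl2) rfl rfl]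
        by_cases hc : (u = v ∧ v' = w ∧ k = nb u v' ∧ l = nb v' u) ∨
            (u = w ∧ v' = v ∧ k = nb v' u ∧ l = nb u v')
        · rw [if_pos hc]
          rcases hc with ⟨rfl, rfl, hk', hl'⟩ | ⟨rfl, rfl, hk', hl'⟩
          · rw [if_pos rfl, if_pos rfl, if_pos ⟨hE.1, hE.2, hk', hl'⟩,
              if_neg (fun hh : v' = u => hvw (hh.symm)), add_zero]
          · rw [if_neg (fun hh : v' = u => hvw hh), zero_add, if_pos rfl, if_pos rfl,
              if_pos ⟨hE.1.symm, hE.2, hk', hl'⟩]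
        · rw [if_neg hc]
          have hT1 : (if v' = w then (if u = v then
              (if G.Adj v w ∧ v < w ∧ k = nb v w ∧ l = nb w v then (1:F) else 0) else 0) else 0)
              = 0 := by
            split_ifs with a1 a2 a3 <;> try rfl
            exact absurd (Or.inl ⟨a2, a1, by rw [a2, a1]; exact a3.2.2.1,
              by rw [a2, a1]; exact a3.2.2.2⟩) hc
          have hT2 : (if v' = v then (if u = w then
              (if G.Adj v w ∧ w < v ∧ k = nb v w ∧ l = nb w v then (1:F) else 0) else 0) else 0)
              = 0 := by
            split_ifs with a1 a2 a3 <;> try rfl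
            exact absurd (Or.inr ⟨a2, a1, by rw [a2, a1]; exact a3.2.2.1,
              by rw [a2, a1]; exact a3.2.2.2⟩) hc
          rw [hT1, hT2, add_zero]
      · rw [if_neg hE]
        have hT1 : (if v' = w then (if u = v then
            (if G.Adj v w ∧ v < w ∧ k = nb v w ∧ l = nb w v then (1:F) else 0) else 0) else 0)
            = 0 := by
          split_ifs with a1 a2 a3 <;> try rfl
          exact absurd ⟨by rw [a1, a2]; exact a3.1, by rw [a1, a2]; exact a3.2.1⟩ hE
        have hT2 : (if v' = v then (if u = w then
            (if G.Adj v w ∧ w < v ∧ k = nb v w ∧ l = nb w v then (1:F) else 0) else 0) else 0)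
            = 0 := by
          split_ifs with a1 a2 a3 <;> try rfl
          exact absurd ⟨by rw [a1, a2]; exact a3.1.symm, by rw [a1, a2]; exact a3.2.1⟩ hE
        rw [hT1, hT2, add_zero]
    rw [Finset.sum_congr rfl fun u _ => Finset.sum_congr rfl fun v' _ => hterm2 u v']
    simp only [Finset.sum_add_distrib, Finset.sum_ite_eq', Finset.mem_univ, if_true]
    rcases lt_trichotomy v w with h | h | h
    · have hD' : ¬ (G.Adj v w ∧ w < v ∧ k = nb v w ∧ l = nb w v) :=
        fun hD' => absurd h (asymm hD'.2.1)
      rw [if_neg hD', add_zero]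
      by_cases hC : G.Adj v w ∧ k = nb v w ∧ l = nb w v
      · rw [if_pos ⟨hC.1, h, hC.2.1, hC.2.2⟩, if_pos hC]
      · rw [if_neg (fun hD => hC ⟨hD.1, hD.2.2.1, hD.2.2.2⟩), if_neg hC]
    · exact absurd h hvw
    · have hD : ¬ (G.Adj v w ∧ v < w ∧ k = nb v w ∧ l = nb w v) :=
        fun hD => absurd h (asymm hD.2.1)
      rw [if_neg hD, zero_add]
      by_cases hC : G.Adj v w ∧ k = nb v w ∧ l = nb w v
      · rw [if_pos ⟨hC.1, h, hC.2.1, hC.2.2⟩, if_pos hC]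
      · rw [if_neg (fun hD => hC ⟨hD.1, hD.2.2.1, hD.2.2.2⟩), if_neg hC]

section pairzero

lemma pair_b_eq_zero {u v : Fin n} (hu : u ∈ A) (hv : v ∈ A) {k l : ℕ}
    (a : {x : Fin n // x ∈ A} → Fin (Δ + 1 + 1)) (b : {x : Fin n // x ∉ A} → Fin (Δ + 1 + 1))
    (h : Finsupp.single u k + Finsupp.single v l = mon A a b) : b = 0 := by
  funext x
  have hx := DFunLike.congr_fun h (x : Fin n)
  rw [Finsupp.add_apply, Finsupp.single_apply, Finsupp.single_apply, mon_apply, dif_neg x.2,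
    if_neg (fun hh : u = (x : Fin n) => x.2 (hh ▸ hu)),
    if_neg (fun hh : v = (x : Fin n) => x.2 (hh ▸ hv)), Subtype.coe_eta] at hx
  exact Fin.val_injective (by simpa using hx.symm)

lemma pair_a_eq_zero {u v : Fin n} (hu : u ∉ A) (hv : v ∉ A) {k l : ℕ}
    (a : {x : Fin n // x ∈ A} → Fin (Δ + 1 + 1)) (b : {x : Fin n // x ∉ A} → Fin (Δ + 1 + 1))
    (h : Finsupp.single u k + Finsupp.single v l = mon A a b) : a = 0 := by
  funext x
  have hx := DFunLike.congr_fun h (x : Fin n)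
  rw [Finsupp.add_apply, Finsupp.single_apply, Finsupp.single_apply, mon_apply, dif_pos x.2,
    if_neg (fun hh : u = (x : Fin n) => hu (hh ▸ x.2)),
    if_neg (fun hh : v = (x : Fin n) => hv (hh ▸ x.2)), Subtype.coe_eta] at hx
  exact Fin.val_injective (by simpa using hx.symm)

lemma single_b_eq_zero {v : Fin n} (hv : v ∈ A) {k : ℕ}
    (a : {x : Fin n // x ∈ A} → Fin (Δ + 1 + 1)) (b : {x : Fin n // x ∉ A} → Fin (Δ + 1 + 1))
    (h : Finsupp.single v k = mon A a b) : b = 0 := by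
  funext x
  have hx := DFunLike.congr_fun h (x : Fin n)
  rw [Finsupp.single_apply, mon_apply, dif_neg x.2,
    if_neg (fun hh : v = (x : Fin n) => x.2 (hh ▸ hv)), Subtype.coe_eta] at hx
  exact Fin.val_injective (by simpa using hx.symm)

lemma single_a_eq_zero {v : Fin n} (hv : v ∉ A) {k : ℕ}
    (a : {x : Fin n // x ∈ A} → Fin (Δ + 1 + 1)) (b : {x : Fin n // x ∉ A} → Fin (Δ + 1 + 1))
    (h : Finsupp.single v k = mon A a b) : a = 0 := by
  funext x
  have hx := DFunLike.congr_fun h (x : Fin n)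
  rw [Finsupp.single_apply, mon_apply, dif_pos x.2,
    if_neg (fun hh : v = (x : Fin n) => hv (hh ▸ x.2)), Subtype.coe_eta] at hx
  exact Fin.val_injective (by simpa using hx.symm)

end pairzero

section EcPart

variable (G : SimpleGraph (Fin n)) [DecidableRel G.Adj]

def EcS : Finset (Fin n × Fin n) :=
  Finset.univ.filter fun p : Fin n × Fin n =>
    G.Adj p.1 p.2 ∧ p.1 < p.2 ∧ ¬(p.1 ∈ A ↔ p.2 ∈ A)

def aS (p : Fin n × Fin n) : Fin n := if p.1 ∈ A then p.1 else p.2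
def bS (p : Fin n × Fin n) : Fin n := if p.1 ∈ A then p.2 else p.1

lemma ec_spec {p : Fin n × Fin n} (hp : p ∈ EcS A G) :
    aS A p ∈ A ∧ bS A p ∉ A ∧ G.Adj (aS A p) (bS A p) := by
  obtain ⟨-, hadj, hlt, hx⟩ := Finset.mem_filter.1 hp
  unfold aS bS
  by_cases h1 : p.1 ∈ A
  · rw [if_pos h1, if_pos h1]
    exact ⟨h1, fun h2 => hx ⟨fun _ => h2, fun _ => h1⟩, hadj⟩
  · rw [if_neg h1, if_neg h1]
    have h2 : p.2 ∈ A := by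
      by_contra h2
      exact hx ⟨fun h => absurd h h1, fun h => absurd h h2⟩
    exact ⟨h2, h1, hadj.symm⟩

lemma ec_lt {p : Fin n × Fin n} (hp : p ∈ EcS A G) : p.1 < p.2 :=
  (Finset.mem_filter.1 hp).2.2.1

lemma pairMon_orient {p : Fin n × Fin n} (nb : Fin n → Fin n → ℕ) :
    Finsupp.single p.1 (nb p.1 p.2) + Finsupp.single p.2 (nb p.2 p.1)
      = Finsupp.single (aS A p) (nb (aS A p) (bS A p))
        + Finsupp.single (bS A p) (nb (bS A p) (aS A p)) := by
  unfold aS bS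
  by_cases h1 : p.1 ∈ A
  · rw [if_pos h1, if_pos h1]
  · rw [if_neg h1, if_neg h1, add_comm]

lemma ec_ext {p q : Fin n × Fin n} (hp : p ∈ EcS A G) (hq : q ∈ EcS A G)
    (h1 : aS A p = aS A q) (h2 : bS A p = bS A q) : p = q := by
  have hpl := ec_lt A G hp
  have hql := ec_lt A G hq
  simp only [aS] at h1
  simp only [bS] at h2
  by_cases hp1 : p.1 ∈ A <;> by_cases hq1 : q.1 ∈ A
  · rw [if_pos hp1, if_pos hq1] at h1
    rw [if_pos hp1, if_pos hq1] at h2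
    exact Prod.ext_iff.2 ⟨h1, h2⟩
  · rw [if_pos hp1, if_neg hq1] at h1
    rw [if_pos hp1, if_neg hq1] at h2
    rw [h1, h2] at hpl
    exact absurd hql (lt_asymm hpl)
  · rw [if_neg hp1, if_pos hq1] at h1
    rw [if_neg hp1, if_pos hq1] at h2
    rw [h2, h1] at hpl
    exact absurd hql (lt_asymm hpl)
  · rw [if_neg hp1, if_neg hq1] at h1
    rw [if_neg hp1, if_neg hq1] at h2
    exact Prod.ext_iff.2 ⟨h2, h1⟩

lemma cross_formula (nb : Fin n → Fin n → ℕ)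
    (hnb_range : ∀ u v, G.Adj u v → 1 ≤ nb u v ∧ nb u v ≤ Δ)
    (a : {x : Fin n // x ∈ A} → Fin (Δ + 1 + 1)) (b : {x : Fin n // x ∉ A} → Fin (Δ + 1 + 1))
    (ha : a ≠ 0) (hb : b ≠ 0) :
    MvPolynomial.coeff (mon A a b)
      (((∑ v : Fin n, X v ^ (Δ + 1)) + ∑ u : Fin n, ∑ v : Fin n,
        if G.Adj u v ∧ u < v then X u ^ (nb u v) * X v ^ (nb v u) else 0 :
        MvPolynomial (Fin n) F))
    = ∑ p ∈ EcS A G, if a = rowOf A Δ (aS A p) (nb (aS A p) (bS A p)) ∧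
        b = colOf A Δ (bS A p) (nb (bS A p) (aS A p)) then (1:F) else 0 := by
  rw [coeff_fG]
  have hz1 : ∀ v' : Fin n, (if Finsupp.single v' (Δ + 1) = mon A a b then (1:F) else 0) = 0 := by
    intro v'
    rw [if_neg]
    intro hc
    by_cases hv' : v' ∈ A
    · exact hb (single_b_eq_zero A hv' a b hc)
    · exact ha (single_a_eq_zero A hv' a b hc)
  rw [Finset.sum_congr rfl fun v' _ => hz1 v', Finset.sum_const_zero, zero_add]
  rw [EcS, Finset.sum_filter,
    ← Finset.sum_product' (s := (Finset.univ : Finset (Fin n)))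
      (t := (Finset.univ : Finset (Fin n)))
      (f := fun u v => if G.Adj u v ∧ u < v then
        (if Finsupp.single u (nb u v) + Finsupp.single v (nb v u) = mon A a b then (1:F) else 0)
        else 0),
    Finset.univ_product_univ]
  refine Finset.sum_congr rfl fun p _ => ?_
  by_cases hE : G.Adj p.1 p.2 ∧ p.1 < p.2
  · rw [if_pos hE]
    by_cases hX : ¬(p.1 ∈ A ↔ p.2 ∈ A)
    · have hp : p ∈ EcS A G := by
        simp only [EcS, Finset.mem_filter]
        exact ⟨Finset.mem_univ _, hE.1, hE.2, hX⟩
      rw [if_pos (show G.Adj p.1 p.2 ∧ p.1 < p.2 ∧ ¬(p.1 ∈ A ↔ p.2 ∈ A) from ⟨hE.1, hE.2, hX⟩)]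
      obtain ⟨haS, hbS, hadj⟩ := ec_spec A G hp
      have hbd1 := hnb_range _ _ hadj
      have hbd2 := hnb_range _ _ hadj.symm
      have hcond : (Finsupp.single p.1 (nb p.1 p.2) + Finsupp.single p.2 (nb p.2 p.1)
            = mon A a b) ↔
          (a = rowOf A Δ (aS A p) (nb (aS A p) (bS A p)) ∧
            b = colOf A Δ (bS A p) (nb (bS A p) (aS A p))) := by
        rw [pairMon_orient A nb]
        exact pair_eq_iff A haS hbS (by omega) (by omega) a b
      rw [if_congr hcond rfl rfl]
    · rw [if_neg (show ¬(G.Adj p.1 p.2 ∧ p.1 < p.2 ∧ ¬(p.1 ∈ A ↔ p.2 ∈ A)) from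
        fun hc => hX hc.2.2), if_neg]
      intro hc
      rw [not_not] at hX
      by_cases h1 : p.1 ∈ A
      · exact hb (pair_b_eq_zero A h1 (hX.1 h1) a b hc)
      · exact ha (pair_a_eq_zero A h1 (fun hh => h1 (hX.2 hh)) a b hc)
  · rw [if_neg hE, if_neg (show ¬(G.Adj p.1 p.2 ∧ p.1 < p.2 ∧ ¬(p.1 ∈ A ↔ p.2 ∈ A)) from
      fun hc => hE ⟨hc.1, hc.2.1⟩)]

end EcPart

end NisanAux2

namespace NisanAux2

open NisanAux

variable {F : Type*} [Field F]

lemma ind_mul {P Q : Prop} [Decidable P] [Decidable Q] :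
    (if P then (1:F) else 0) * (if Q then (1:F) else 0) = if P ∧ Q then 1 else 0 := by
  split_ifs <;> (try simp) <;> tauto

lemma rank_eq {n Δ : ℕ} (G : SimpleGraph (Fin n)) [DecidableRel G.Adj]
    (nb : Fin n → Fin n → ℕ)
    (hnb_range : ∀ u v, G.Adj u v → 1 ≤ nb u v ∧ nb u v ≤ Δ)
    (hnb_inj : ∀ u v v', G.Adj u v → G.Adj u v' → nb u v = nb u v' → v = v')
    (A : Finset (Fin n)) {v0 w0 : Fin n} (hv0 : v0 ∈ A) (hw0 : w0 ∉ A) :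
    (nisanMatrix (Δ + 1)
        (((∑ v : Fin n, X v ^ (Δ + 1)) +
          ∑ u : Fin n, ∑ v : Fin n,
            if G.Adj u v ∧ u < v then X u ^ (nb u v) * X v ^ (nb v u) else 0 :
          MvPolynomial (Fin n) F)) A).rank
      = 2 + (EcS A G).card := by
  classical
  set f : MvPolynomial (Fin n) F :=
    (∑ v : Fin n, X v ^ (Δ + 1)) +
      ∑ u : Fin n, ∑ v : Fin n,
        if G.Adj u v ∧ u < v then X u ^ (nb u v) * X v ^ (nb v u) else 0 with hf
  set M : Matrix _ _ F := nisanMatrix (Δ + 1) f A with hMdef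
  have hMab : ∀ a b, M a b = MvPolynomial.coeff (mon A a b) f := fun a b => rfl
  -- basic facts about crossing edges
  have hkp : ∀ p ∈ EcS A G, 1 ≤ nb (aS A p) (bS A p) ∧ nb (aS A p) (bS A p) ≤ Δ :=
    fun p hp => hnb_range _ _ (ec_spec A G hp).2.2
  have hlp : ∀ p ∈ EcS A G, 1 ≤ nb (bS A p) (aS A p) ∧ nb (bS A p) (aS A p) ≤ Δ :=
    fun p hp => hnb_range _ _ (ec_spec A G hp).2.2.symm
  have hrP : ∀ p ∈ EcS A G, rowOf A Δ (aS A p) (nb (aS A p) (bS A p)) ≠ 0 := fun p hp =>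
    rowOf_ne_zero A (ec_spec A G hp).1 (by have := (hkp p hp).2; omega)
      (by have := (hkp p hp).1; omega)
  have hcP : ∀ p ∈ EcS A G, colOf A Δ (bS A p) (nb (bS A p) (aS A p)) ≠ 0 := fun p hp =>
    colOf_ne_zero A (ec_spec A G hp).2.1 (by have := (hlp p hp).2; omega)
      (by have := (hlp p hp).1; omega)
  -- the master entry formula, for the matrix M
  have hmaster : ∀ (v w : Fin n), v ∈ A → w ∉ A → ∀ k l : ℕ, k ≤ Δ + 1 → l ≤ Δ + 1 →
      M (rowOf A Δ v k) (colOf A Δ w l)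
        = ((if k = Δ + 1 ∧ l = 0 then (1:F) else 0)
            + (if k = 0 ∧ l = Δ + 1 then (1:F) else 0))
          + (if G.Adj v w ∧ k = nb v w ∧ l = nb w v then (1:F) else 0) :=
    fun v w hv hw k l hk hl => master A G nb hnb_range hv hw hk hl
  -- ===== upper bound =====
  have hupper : M.rank ≤ 2 + (EcS A G).card := by
    set M1 : Matrix ({x : Fin n // x ∈ A} → Fin (Δ + 1 + 1)) ({x : Fin n // x ∉ A} → Fin (Δ + 1 + 1)) F :=
      Matrix.vecMulVec (fun a => M a 0) (fun b => if b = 0 then (1:F) else 0) with hM1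
    set M2 : Matrix ({x : Fin n // x ∈ A} → Fin (Δ + 1 + 1)) ({x : Fin n // x ∉ A} → Fin (Δ + 1 + 1)) F :=
      Matrix.vecMulVec (fun a => if a = 0 then (1:F) else 0)
        (fun b => if b = 0 then 0 else M 0 b) with hM2
    set M3 : Matrix ({x : Fin n // x ∈ A} → Fin (Δ + 1 + 1)) ({x : Fin n // x ∉ A} → Fin (Δ + 1 + 1)) F :=
      ∑ p ∈ EcS A G, Matrix.vecMulVec
        (fun a => if a = rowOf A Δ (aS A p) (nb (aS A p) (bS A p)) then (1:F) else 0)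
        (fun b => if b = colOf A Δ (bS A p) (nb (bS A p) (aS A p)) then (1:F) else 0) with hM3
    have hM3ab : ∀ a b, M3 a b = ∑ p ∈ EcS A G,
        (if a = rowOf A Δ (aS A p) (nb (aS A p) (bS A p)) ∧
            b = colOf A Δ (bS A p) (nb (bS A p) (aS A p)) then (1:F) else 0) := by
      intro a b
      rw [hM3, Matrix.sum_apply]
      exact Finset.sum_congr rfl fun p _ => by rw [Matrix.vecMulVec_apply, ind_mul]
    have hdecomp : M = M1 + M2 + M3 := by
      ext a b
      rw [Matrix.add_apply, Matrix.add_apply, hM3ab, hM1, hM2,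
        Matrix.vecMulVec_apply, Matrix.vecMulVec_apply]
      by_cases hb0 : b = 0
      · subst hb0
        rw [Finset.sum_eq_zero fun p hp => if_neg (fun hc => hcP p hp hc.2.symm)]
        simp
      · by_cases ha0 : a = 0
        · subst ha0
          rw [Finset.sum_eq_zero fun p hp => if_neg (fun hc => hrP p hp hc.1.symm)]
          simp [hb0]
        · rw [hMab, cross_formula A G nb hnb_range a b ha0 hb0]
          simp [ha0, hb0]
    calc M.rank ≤ (M1 + M2).rank + M3.rank := by rw [hdecomp]; exact rank_add_le _ _
    _ ≤ (M1.rank + M2.rank) + M3.rank := by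
        have := rank_add_le M1 M2; omega
    _ ≤ (1 + 1) + (EcS A G).card := by
        have h1 : M1.rank ≤ 1 := NisanAux.rank_vecMulVec_le _ _
        have h2 : M2.rank ≤ 1 := NisanAux.rank_vecMulVec_le _ _
        have h3 : M3.rank ≤ (EcS A G).card :=
          rank_sum_le _ _ fun p _ => NisanAux.rank_vecMulVec_le _ _
        omega
    _ = 2 + (EcS A G).card := by omega
  -- ===== lower bound =====
  have hlower : 2 + (EcS A G).card ≤ M.rank := by
    set ι := (Unit ⊕ (Unit ⊕ {p : Fin n × Fin n // p ∈ EcS A G})) with hι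
    set rIdx : ι → ({x : Fin n // x ∈ A} → Fin (Δ + 1 + 1)) :=
      Sum.elim (fun _ => rowOf A Δ v0 (Δ + 1))
        (Sum.elim (fun _ => 0) (fun q => rowOf A Δ (aS A q.1) (nb (aS A q.1) (bS A q.1))))
      with hrIdx
    set cIdx : ι → ({x : Fin n // x ∉ A} → Fin (Δ + 1 + 1)) :=
      Sum.elim (fun _ => 0)
        (Sum.elim (fun _ => colOf A Δ w0 (Δ + 1))
          (fun q => colOf A Δ (bS A q.1) (nb (bS A q.1) (aS A q.1))))
      with hcIdx
    have hsub : M.submatrix rIdx cIdx = (1 : Matrix ι ι F) := by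
      ext i j
      rw [Matrix.submatrix_apply]
      rcases i with i | i | q <;> rcases j with j | j | q' <;>
        simp only [hrIdx, hcIdx, Sum.elim_inl, Sum.elim_inr]
      · -- (v0, Δ+1) vs zero column
        rw [show (0 : {x : Fin n // x ∉ A} → Fin (Δ + 1 + 1)) = colOf A Δ w0 0 from
            (colOf_zero A w0).symm,
          hmaster v0 w0 hv0 hw0 (Δ + 1) 0 le_rfl (by omega),
          if_pos ⟨rfl, rfl⟩, if_neg (by omega),
          if_neg (fun hc => by have := (hnb_range _ _ hc.1).2; omega)]
        rcases i; rcases j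
        rw [Matrix.one_apply_eq]
        norm_num
      · rw [hmaster v0 w0 hv0 hw0 (Δ + 1) (Δ + 1) le_rfl le_rfl,
          if_neg (by omega), if_neg (by omega),
          if_neg (fun hc => by have := (hnb_range _ _ hc.1).2; omega),
          Matrix.one_apply_ne (by simp)]
        norm_num
      · rw [hmaster v0 (bS A q'.1) hv0 (ec_spec A G q'.2).2.1 (Δ + 1) _ le_rfl
            (by have := (hlp q'.1 q'.2).2; omega),
          if_neg (fun hc => by have := (hlp q'.1 q'.2).1; omega),
          if_neg (by omega),
          if_neg (fun hc => by have := (hnb_range _ _ hc.1).2; omega),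
          Matrix.one_apply_ne (by simp)]
        norm_num
      · rw [show (0 : {x : Fin n // x ∈ A} → Fin (Δ + 1 + 1)) = rowOf A Δ v0 0 from
            (rowOf_zero A v0).symm,
          show (0 : {x : Fin n // x ∉ A} → Fin (Δ + 1 + 1)) = colOf A Δ w0 0 from
            (colOf_zero A w0).symm,
          hmaster v0 w0 hv0 hw0 0 0 (by omega) (by omega),
          if_neg (by omega), if_neg (by omega),
          if_neg (fun hc => by have := (hnb_range _ _ hc.1).1; omega),
          Matrix.one_apply_ne (by simp)]
        norm_num
      · rw [show (0 : {x : Fin n // x ∈ A} → Fin (Δ + 1 + 1)) = rowOf A Δ v0 0 from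
            (rowOf_zero A v0).symm,
          hmaster v0 w0 hv0 hw0 0 (Δ + 1) (by omega) le_rfl,
          if_neg (by omega), if_pos ⟨rfl, rfl⟩,
          if_neg (fun hc => by have := (hnb_range _ _ hc.1).1; omega)]
        rcases i; rcases j
        rw [Matrix.one_apply_eq]
        norm_num
      · rw [show (0 : {x : Fin n // x ∈ A} → Fin (Δ + 1 + 1)) = rowOf A Δ v0 0 from
            (rowOf_zero A v0).symm,
          hmaster v0 (bS A q'.1) hv0 (ec_spec A G q'.2).2.1 0 _ (by omega)
            (by have := (hlp q'.1 q'.2).2; omega),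
          if_neg (by omega),
          if_neg (fun hc => by have := (hlp q'.1 q'.2).2; omega),
          if_neg (fun hc => by have := (hnb_range _ _ hc.1).1; omega),
          Matrix.one_apply_ne (by simp)]
        norm_num
      · rw [show (0 : {x : Fin n // x ∉ A} → Fin (Δ + 1 + 1)) = colOf A Δ w0 0 from
            (colOf_zero A w0).symm,
          hmaster (aS A q.1) w0 (ec_spec A G q.2).1 hw0 _ 0
            (by have := (hkp q.1 q.2).2; omega) (by omega),
          if_neg (fun hc => by have := (hkp q.1 q.2).2; omega),
          if_neg (fun hc => by have := (hkp q.1 q.2).1; omega),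
          if_neg (fun hc => by have := (hnb_range _ _ hc.1.symm).1; omega),
          Matrix.one_apply_ne (by simp)]
        norm_num
      · rw [hmaster (aS A q.1) w0 (ec_spec A G q.2).1 hw0 _ (Δ + 1)
            (by have := (hkp q.1 q.2).2; omega) le_rfl,
          if_neg (fun hc => by have := (hkp q.1 q.2).2; omega),
          if_neg (fun hc => by have := (hkp q.1 q.2).1; omega),
          if_neg (fun hc => by have := (hnb_range _ _ hc.1.symm).2; omega),
          Matrix.one_apply_ne (by simp)]
        norm_num
      · -- crossing vs crossing
        rw [hmaster (aS A q.1) (bS A q'.1) (ec_spec A G q.2).1 (ec_spec A G q'.2).2.1 _ _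
            (by have := (hkp q.1 q.2).2; omega) (by have := (hlp q'.1 q'.2).2; omega),
          if_neg (fun hc => by have := (hkp q.1 q.2).2; omega),
          if_neg (fun hc => by have := (hkp q.1 q.2).1; omega)]
        rcases eq_or_ne q q' with rfl | hne
        · rw [if_pos ⟨(ec_spec A G q.2).2.2, rfl, rfl⟩, Matrix.one_apply_eq]
          norm_num
        · rw [if_neg, Matrix.one_apply_ne (by simp [hne])]
          · norm_num
          · intro hc
            have hb : bS A q.1 = bS A q'.1 :=
              hnb_inj (aS A q.1) _ _ (ec_spec A G q.2).2.2 hc.1 hc.2.1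
            have ha : aS A q'.1 = aS A q.1 :=
              hnb_inj (bS A q'.1) _ _ (ec_spec A G q'.2).2.2.symm hc.1.symm hc.2.2
            exact hne (Subtype.ext (ec_ext A G q.2 q'.2 ha.symm hb))
    have hcard : Fintype.card ι = 2 + (EcS A G).card := by
      simp [hι, Fintype.card_coe]
      omega
    calc 2 + (EcS A G).card = (1 : Matrix ι ι F).rank := by
          rw [Matrix.rank_one, hcard]
    _ = (M.submatrix rIdx cIdx).rank := by rw [hsub]
    _ ≤ M.rank := rank_submatrix_le' M rIdx cIdx
  omega

end NisanAux2

/-- For a simple graph `G` on `{1, …, n}` with maximum degree `Δ` and injections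
`nb u : Nbr(u) ↪ {1, …, Δ}`, the polynomial
`f_G = Σ_v x_v^{Δ+1} + Σ_{{u,v} ∈ E} x_u^{nb u v} x_v^{nb v u}` satisfies: for every nontrivial
partition `A ⊔ Aᶜ`, the rank of its Nisan matrix w.r.t. `A` is `2 + c_G(A, Aᶜ)`, the number of
crossing edges plus two. -/
theorem nisan_rank_graph_poly {F : Type*} [Field F] {n Δ : ℕ} (hn : 2 ≤ n)
    (G : SimpleGraph (Fin n)) [DecidableRel G.Adj]
    (hdeg : ∀ v, G.degree v ≤ Δ)
    (nb : Fin n → Fin n → ℕ)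
    (hnb_range : ∀ u v, G.Adj u v → 1 ≤ nb u v ∧ nb u v ≤ Δ)
    (hnb_inj : ∀ u v v', G.Adj u v → G.Adj u v' → nb u v = nb u v' → v = v')
    (A : Finset (Fin n)) (hA : A.Nonempty) (hB : Aᶜ.Nonempty) :
    (nisanMatrix (Δ + 1)
        (((∑ v : Fin n, X v ^ (Δ + 1)) +
          ∑ u : Fin n, ∑ v : Fin n,
            if G.Adj u v ∧ u < v then X u ^ (nb u v) * X v ^ (nb v u) else 0 :
          MvPolynomial (Fin n) F)) A).rank
      = 2 + (Finset.univ.filter fun p : Fin n × Fin n =>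
          G.Adj p.1 p.2 ∧ p.1 < p.2 ∧ ¬(p.1 ∈ A ↔ p.2 ∈ A)).card := by
  obtain ⟨v0, hv0⟩ := hA
  obtain ⟨w0, hw0c⟩ := hB
  have hw0 : w0 ∉ A := by simpa using hw0c
  exact NisanAux2.rank_eq G nb hnb_range hnb_inj A hv0 hw0
end

section
/- Let F be a field with at least d+1 elements, let f be an n-variate polynomial over F of individual degree at most d, let T ⊆ {1,…,n} with |T| = k, and let w be a nonnegative integer. Introduce fresh variable tuples y_1,…,y_{w+1} (each a tuple of k variables) and z_1,…,z_{w+1} (each a tuple of n−k variables), and let E_0 be the (w+1)×(w+1) matrix over the polynomial ring in these fresh variables whose (i,j) entry is f with the variables indexed by T substituted by y_i and the remaining variables substituted by z_j. Then det(E_0) is a nonzero polynomial if and only if rank(M_T(f)) > w. -/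
open MvPolynomial

section RankLemma
open Matrix Module

variable {F : Type*} [Field F]

lemma exists_indep_family {V : Type*} [AddCommGroup V] [Module F V] {α : Type*} [Fintype α]
    (v : α → V) {r : ℕ} (h : r ≤ finrank F (Submodule.span F (Set.range v))) :
    ∃ a : Fin r → α, LinearIndependent F (v ∘ a) := by
  obtain ⟨s, hsub, hspan, hind⟩ := exists_linearIndependent F (Set.range v)
  have hfin : s.Finite := (Set.finite_range v).subset hsub
  haveI : Fintype s := hfin.fintype
  have hcard : finrank F (Submodule.span F s) = s.toFinset.card :=
    finrank_span_set_eq_card hind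
  have hr : r ≤ Fintype.card s := by
    rw [← Set.toFinset_card, ← hcard, hspan]; exact h
  obtain ⟨e⟩ : Nonempty (Fin r ↪ s) :=
    Function.Embedding.nonempty_of_card_le (by simpa using hr)
  have hchoice : ∀ j : Fin r, ∃ a : α, v a = (e j : V) := fun j => hsub (e j).2
  choose a ha using hchoice
  refine ⟨a, ?_⟩
  have : v ∘ a = Subtype.val ∘ e := by
    funext j; simp [Function.comp, ha j]
  rw [this]
  exact hind.comp e e.injective

lemma exists_indep_rows {α β : Type*} [Fintype α] [Fintype β]
    (M : Matrix α β F) {r : ℕ} (h : r ≤ M.rank) :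
    ∃ a : Fin r → α, LinearIndependent F (fun i => M (a i)) := by
  rw [M.rank_eq_finrank_span_row] at h
  exact exists_indep_family M h

/-- Rank `≥ r` iff there is an `r × r` submatrix with nonzero determinant. -/
lemma le_rank_iff_exists_submatrix {α β : Type*} [Fintype α] [Fintype β]
    [DecidableEq α] [DecidableEq β] (M : Matrix α β F) (r : ℕ) :
    (∃ (a : Fin r → α) (b : Fin r → β), (M.submatrix a b).det ≠ 0) ↔ r ≤ M.rank := by
  constructor
  · rintro ⟨a, b, hdet⟩
    -- M.submatrix a b = P * M * Q
    set P : Matrix (Fin r) α F := Matrix.of fun i x => if x = a i then 1 else 0 with hP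
    set Q : Matrix β (Fin r) F := Matrix.of fun x j => if x = b j then 1 else 0 with hQ
    have key : M.submatrix a b = P * M * Q := by
      ext i j
      simp only [Matrix.mul_apply, hP, hQ, Matrix.of_apply, Matrix.submatrix_apply]
      simp [Finset.sum_ite_eq, ite_mul, mul_ite]
    have h1 : (M.submatrix a b).rank = r := by
      rw [Matrix.rank_of_isUnit _ (Matrix.isUnit_iff_isUnit_det _ |>.2 hdet.isUnit)]
      simp
    calc r = (M.submatrix a b).rank := h1.symm
      _ = (P * M * Q).rank := by rw [key]
      _ ≤ (P * M).rank := Matrix.rank_mul_le_left _ _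
      _ ≤ M.rank := Matrix.rank_mul_le_right _ _
  · intro h
    -- pick independent columns
    have hcols : r ≤ finrank F (Submodule.span F (Set.range Mᵀ)) := by
      rw [Matrix.rank_eq_finrank_span_cols] at h; exact h
    obtain ⟨b, hb⟩ := exists_indep_family Mᵀ hcols
    set M' : Matrix α (Fin r) F := M.submatrix id b with hM'
    have hM'T : LinearIndependent F M'ᵀ := by
      exact hb
    have hrank' : r ≤ M'.rank := by
      rw [← Matrix.rank_transpose, LinearIndependent.rank_matrix (M := M'ᵀ) hM'T]
      simp
    obtain ⟨a, ha⟩ := exists_indep_rows M' hrank'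
    refine ⟨a, b, ?_⟩
    have hrows : LinearIndependent F (M.submatrix a b) := by
      exact ha
    have : IsUnit (M.submatrix a b) := Matrix.linearIndependent_rows_iff_isUnit.mp hrows
    intro h0
    rw [Matrix.isUnit_iff_isUnit_det, h0] at this
    exact this.ne_zero rfl

end RankLemma

section Aux

variable {F : Type*} [Field F] {V : Type*} [Fintype V] [DecidableEq V] {d w : ℕ} {T : Finset V}

/-- The monomial `∏ t, y_{i,t}^{a t}`. -/
noncomputable def Ypoly (F : Type*) [Field F] {V : Type*} [Fintype V] [DecidableEq V]
    (d w : ℕ) (T : Finset V) (i : Fin (w + 1)) (a : {x : V // x ∈ T} → Fin (d + 1)) :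
    MvPolynomial ((Fin (w + 1) × {x : V // x ∈ T}) ⊕ (Fin (w + 1) × {x : V // x ∉ T})) F :=
  ∏ t, X (Sum.inl (i, t)) ^ (a t : ℕ)

noncomputable def Zpoly (F : Type*) [Field F] {V : Type*} [Fintype V] [DecidableEq V]
    (d w : ℕ) (T : Finset V) (j : Fin (w + 1)) (b : {x : V // x ∉ T} → Fin (d + 1)) :
    MvPolynomial ((Fin (w + 1) × {x : V // x ∈ T}) ⊕ (Fin (w + 1) × {x : V // x ∉ T})) F :=
  ∏ t, X (Sum.inr (j, t)) ^ (b t : ℕ)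

/-- The exponent vector of `∏ i, Y i (as i) * ∏ j, Z j (bs j)`. -/
noncomputable def monOf {V : Type*} [Fintype V] [DecidableEq V] (d w : ℕ) (T : Finset V)
    (as : Fin (w + 1) → ({x : V // x ∈ T} → Fin (d + 1)))
    (bs : Fin (w + 1) → ({x : V // x ∉ T} → Fin (d + 1))) :
    ((Fin (w + 1) × {x : V // x ∈ T}) ⊕ (Fin (w + 1) × {x : V // x ∉ T})) →₀ ℕ :=
  Finsupp.equivFunOnFinite.symm
    (Sum.elim (fun p => (as p.1 p.2 : ℕ)) (fun p => (bs p.1 p.2 : ℕ)))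

lemma monOf_injective :
    Function.Injective (fun p : (Fin (w + 1) → ({x : V // x ∈ T} → Fin (d + 1))) ×
        (Fin (w + 1) → ({x : V // x ∉ T} → Fin (d + 1))) => monOf d w T p.1 p.2) := by
  rintro ⟨as, bs⟩ ⟨as', bs'⟩ h
  have h' := Finsupp.equivFunOnFinite.symm.injective h
  refine Prod.ext ?_ ?_
  · funext i t
    have := congrFun h' (Sum.inl (i, t))
    simpa [Fin.val_eq_val] using this
  · funext j t
    have := congrFun h' (Sum.inr (j, t))
    simpa [Fin.val_eq_val] using this

lemma prod_Y_mul_prod_Z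
    (as : Fin (w + 1) → ({x : V // x ∈ T} → Fin (d + 1)))
    (bs : Fin (w + 1) → ({x : V // x ∉ T} → Fin (d + 1))) :
    (∏ i, Ypoly F d w T i (as i)) * (∏ j, Zpoly F d w T j (bs j)) =
      monomial (monOf d w T as bs) (1 : F) := by
  have h1 : monomial (monOf d w T as bs) (1 : F) =
      ∏ x, X x ^ (monOf d w T as bs x) := by
    rw [← prod_X_pow_eq_monomial]
    refine Finset.prod_subset (Finset.subset_univ _) (fun x _ hx => ?_)
    rw [Finsupp.notMem_support_iff.mp hx, pow_zero]
  rw [h1, Fintype.prod_sum_type]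
  congr 1
  · rw [Fintype.prod_prod_type]
    simp [Ypoly, monOf]
  · rw [Fintype.prod_prod_type]
    simp [Zpoly, monOf]

end Aux
section StepA

variable {F : Type*} [Field F] {V : Type*} [Fintype V] [DecidableEq V] {d w : ℕ} {T : Finset V}

/-- The exponent vector on `V` determined by a pair `(a, b)`. -/
noncomputable def expOf {V : Type*} [Fintype V] [DecidableEq V] (d : ℕ) (T : Finset V)
    (p : ({x : V // x ∈ T} → Fin (d + 1)) × ({x : V // x ∉ T} → Fin (d + 1))) : V →₀ ℕ :=
  Finsupp.equivFunOnFinite.symm fun v =>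
    if h : v ∈ T then (p.1 ⟨v, h⟩ : ℕ) else (p.2 ⟨v, h⟩ : ℕ)

lemma expOf_injective : Function.Injective (expOf d T (V := V)) := by
  rintro ⟨a, b⟩ ⟨a', b'⟩ h
  have h' := Finsupp.equivFunOnFinite.symm.injective h
  refine Prod.ext ?_ ?_
  · funext t
    have := congrFun h' t.1
    simpa [expOf, dif_pos t.2, Fin.val_eq_val, Subtype.coe_eta] using this
  · funext t
    have := congrFun h' t.1
    simpa [expOf, dif_neg t.2, Fin.val_eq_val, Subtype.coe_eta] using this

lemma eval2_eq_sum (f : MvPolynomial V F) (hf : IndivDegLE f d) (i j : Fin (w + 1)) :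
    eval₂ (C : F →+* MvPolynomial
        ((Fin (w + 1) × {x : V // x ∈ T}) ⊕ (Fin (w + 1) × {x : V // x ∉ T})) F)
      (fun t => if h : t ∈ T then X (Sum.inl (i, ⟨t, h⟩)) else X (Sum.inr (j, ⟨t, h⟩))) f
    = ∑ p : ({x : V // x ∈ T} → Fin (d + 1)) × ({x : V // x ∉ T} → Fin (d + 1)),
        C (nisanMatrix d f T p.1 p.2) * (Ypoly F d w T i p.1 * Zpoly F d w T j p.2) := by
  set g := fun t => if h : t ∈ T then
      (X (Sum.inl (i, ⟨t, h⟩)) : MvPolynomial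
        ((Fin (w + 1) × {x : V // x ∈ T}) ⊕ (Fin (w + 1) × {x : V // x ∉ T})) F)
    else X (Sum.inr (j, ⟨t, h⟩)) with hg
  have hsup : f.support ⊆ Finset.univ.image (expOf d T) := by
    intro m hm
    refine Finset.mem_image.mpr ⟨(fun t => ⟨m t.1, Nat.lt_succ_of_le (hf m hm t.1)⟩,
      fun t => ⟨m t.1, Nat.lt_succ_of_le (hf m hm t.1)⟩), Finset.mem_univ _, ?_⟩
    apply Finsupp.equivFunOnFinite.injective
    funext v
    simp only [expOf, Equiv.apply_symm_apply]
    split_ifs <;> simp [Finsupp.equivFunOnFinite]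
  calc eval₂ C g f = ∑ m ∈ f.support, C (coeff m f) * ∏ v : V, g v ^ m v := by
        conv_lhs => rw [f.as_sum]
        rw [eval₂_sum]
        exact Finset.sum_congr rfl fun m _ => by rw [eval₂_monomial, Finsupp.prod_pow]
    _ = ∑ m ∈ Finset.univ.image (expOf d T), C (coeff m f) * ∏ v : V, g v ^ m v := by
        refine Finset.sum_subset hsup fun m _ hm => ?_
        rw [MvPolynomial.notMem_support_iff.mp hm]
        simp
    _ = ∑ p : ({x : V // x ∈ T} → Fin (d + 1)) × ({x : V // x ∉ T} → Fin (d + 1)),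
          C (coeff (expOf d T p) f) * ∏ v : V, g v ^ (expOf d T p) v := by
        rw [Finset.sum_image (fun p _ q _ h => expOf_injective h)]
    _ = _ := by
        refine Finset.sum_congr rfl fun p _ => ?_
        have hcoeff : coeff (expOf d T p) f = nisanMatrix d f T p.1 p.2 := rfl
        rw [hcoeff]
        congr 1
        rw [← Finset.prod_mul_prod_compl T (fun v => g v ^ (expOf d T p) v)]
        congr 1
        · rw [Finset.prod_subtype T (fun x => Iff.rfl) (fun v => g v ^ (expOf d T p) v)]
          refine Finset.prod_congr rfl fun t _ => ?_
          simp [hg, Ypoly, dif_pos t.2, expOf, Finsupp.coe_equivFunOnFinite_symm, Subtype.coe_eta]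
        · rw [Finset.prod_subtype Tᶜ (fun x => Finset.mem_compl) (fun v => g v ^ (expOf d T p) v)]
          refine Finset.prod_congr rfl fun t _ => ?_
          simp [hg, Zpoly, dif_neg t.2, expOf, Finsupp.coe_equivFunOnFinite_symm, Subtype.coe_eta]

end StepA
section StepB
open Matrix

variable {F : Type*} [Field F] {V : Type*} [Fintype V] [DecidableEq V] {d w : ℕ} {T : Finset V}

lemma det_E_eq (f : MvPolynomial V F) (hf : IndivDegLE f d) :
    (Matrix.det (Matrix.of fun i j : Fin (w + 1) =>
        eval₂ (C : F →+* MvPolynomial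
            ((Fin (w + 1) × {x : V // x ∈ T}) ⊕ (Fin (w + 1) × {x : V // x ∉ T})) F)
          (fun t => if h : t ∈ T then X (Sum.inl (i, ⟨t, h⟩)) else X (Sum.inr (j, ⟨t, h⟩)))
          f))
    = ∑ p : (Fin (w + 1) → ({x : V // x ∈ T} → Fin (d + 1))) ×
          (Fin (w + 1) → ({x : V // x ∉ T} → Fin (d + 1))),
        monomial (monOf d w T p.1 p.2) (Matrix.det ((nisanMatrix d f T).submatrix p.1 p.2)) := by
  classical
  set M := nisanMatrix d f T with hM
  set rowv : ({x : V // x ∈ T} → Fin (d + 1)) →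
      (Fin (w + 1) → MvPolynomial ((Fin (w + 1) × {x : V // x ∈ T}) ⊕
        (Fin (w + 1) × {x : V // x ∉ T})) F) :=
    fun a j => ∑ b, C (M a b) * Zpoly F d w T j b with hrowv
  have hE : (Matrix.of fun i j : Fin (w + 1) =>
      eval₂ (C : F →+* MvPolynomial
          ((Fin (w + 1) × {x : V // x ∈ T}) ⊕ (Fin (w + 1) × {x : V // x ∉ T})) F)
        (fun t => if h : t ∈ T then X (Sum.inl (i, ⟨t, h⟩)) else X (Sum.inr (j, ⟨t, h⟩)))
        f) = fun i => ∑ a, Ypoly F d w T i a • rowv a := by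
    funext i j
    rw [Matrix.of_apply, eval2_eq_sum f hf i j, Fintype.sum_prod_type]
    simp only [Finset.sum_apply, Pi.smul_apply, smul_eq_mul, hrowv, Finset.mul_sum]
    exact Finset.sum_congr rfl fun a _ => Finset.sum_congr rfl fun b _ => by ring
  rw [hE]
  have step1 : Matrix.det (fun i => ∑ a, Ypoly F d w T i a • rowv a) =
      ∑ r : Fin (w + 1) → ({x : V // x ∈ T} → Fin (d + 1)),
        Matrix.detRowAlternating.toMultilinearMap (fun i => Ypoly F d w T i (r i) • rowv (r i)) :=
    MultilinearMap.map_sum _ _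
  rw [step1]
  have step2 : ∀ r : Fin (w + 1) → ({x : V // x ∈ T} → Fin (d + 1)),
      Matrix.detRowAlternating.toMultilinearMap (fun i => Ypoly F d w T i (r i) • rowv (r i)) =
      (∏ i, Ypoly F d w T i (r i)) • Matrix.det (fun i => rowv (r i)) := fun r =>
    MultilinearMap.map_smul_univ _ _ _
  simp only [step2]
  have step3 : ∀ r : Fin (w + 1) → ({x : V // x ∈ T} → Fin (d + 1)),
      Matrix.det (fun i => rowv (r i)) =
      ∑ c : Fin (w + 1) → ({x : V // x ∉ T} → Fin (d + 1)),
        (∏ j, Zpoly F d w T j (c j)) • C (Matrix.det (M.submatrix r c)) := by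
    intro r
    have ht : (Matrix.of fun i => rowv (r i))ᵀ =
        fun j => ∑ b, Zpoly F d w T j b • (fun i => C (M (r i) b)) := by
      funext j i
      simp only [Matrix.transpose_apply, Matrix.of_apply, hrowv, Finset.sum_apply,
        Pi.smul_apply, smul_eq_mul]
      exact Finset.sum_congr rfl fun b _ => mul_comm _ _
    rw [show Matrix.det (fun i => rowv (r i)) = Matrix.det (Matrix.of fun i => rowv (r i)) from rfl,
      ← Matrix.det_transpose, ht]
    rw [show Matrix.det (fun j => ∑ b, Zpoly F d w T j b • (fun i => C (M (r i) b))) =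
        ∑ c : Fin (w + 1) → ({x : V // x ∉ T} → Fin (d + 1)),
          Matrix.detRowAlternating.toMultilinearMap
            (fun j => Zpoly F d w T j (c j) • (fun i => C (M (r i) (c j)))) from
      MultilinearMap.map_sum _ _]
    refine Finset.sum_congr rfl fun c _ => ?_
    rw [MultilinearMap.map_smul_univ]
    congr 1
    have hmat : (Matrix.of fun j i => (C (M (r i) (c j)) : MvPolynomial
          ((Fin (w + 1) × {x : V // x ∈ T}) ⊕ (Fin (w + 1) × {x : V // x ∉ T})) F)) =
        ((M.submatrix r c).map ⇑(C : F →+* MvPolynomial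
          ((Fin (w + 1) × {x : V // x ∈ T}) ⊕ (Fin (w + 1) × {x : V // x ∉ T})) F))ᵀ := rfl
    show Matrix.det (Matrix.of fun j i => (C (M (r i) (c j)) : MvPolynomial
          ((Fin (w + 1) × {x : V // x ∈ T}) ⊕ (Fin (w + 1) × {x : V // x ∉ T})) F)) = _
    rw [hmat, Matrix.det_transpose]
    exact (RingHom.map_det C (M.submatrix r c)).symm
  simp only [step3, Finset.smul_sum, smul_eq_mul, Finset.mul_sum]
  rw [Fintype.sum_prod_type]
  refine Finset.sum_congr rfl fun r _ => Finset.sum_congr rfl fun c _ => ?_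
  rw [← mul_assoc, prod_Y_mul_prod_Z, mul_comm, C_mul_monomial, mul_one]

end StepB

/-- Let `E₀` be the `(w+1) × (w+1)` matrix over the polynomial ring in fresh variable tuples
`y_1, …, y_{w+1}` (tuples over `T`) and `z_1, …, z_{w+1}` (tuples over the complement of `T`)
whose `(i,j)` entry is `f` with the `T`-variables replaced by `y_i` and the rest by `z_j`.
If `F` has at least `d + 1` elements, then `det E₀ ≠ 0` iff `rank M_T(f) > w`. -/
theorem det_fresh_eval_matrix_ne_zero_iff {F : Type*} [Field F] {n d w : ℕ}
    (hF : ∃ s : Fin (d + 1) → F, Function.Injective s)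
    (f : MvPolynomial (Fin n) F) (hf : IndivDegLE f d) (T : Finset (Fin n)) :
    (Matrix.det (Matrix.of fun i j : Fin (w + 1) =>
        eval₂ (C : F →+* MvPolynomial
            ((Fin (w + 1) × {x : Fin n // x ∈ T}) ⊕ (Fin (w + 1) × {x : Fin n // x ∉ T})) F)
          (fun t => if h : t ∈ T then X (Sum.inl (i, ⟨t, h⟩)) else X (Sum.inr (j, ⟨t, h⟩)))
          f) ≠ 0)
      ↔ w < (nisanMatrix d f T).rank := by
  classical
  rw [det_E_eq f hf]
  rw [show (w < (nisanMatrix d f T).rank) ↔ (w + 1 ≤ (nisanMatrix d f T).rank) from Iff.rfl,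
    ← le_rank_iff_exists_submatrix (nisanMatrix d f T) (w + 1)]
  constructor
  · intro hne
    by_contra hall
    push_neg at hall
    refine hne (Finset.sum_eq_zero fun p _ => ?_)
    rw [hall p.1 p.2]
    simp
  · rintro ⟨a, b, hab⟩ h0
    apply hab
    have hco := congrArg (coeff (monOf d w T a b)) h0
    rw [MvPolynomial.coeff_sum] at hco
    rw [Finset.sum_eq_single ((a, b) : (Fin (w + 1) → ({x : Fin n // x ∈ T} → Fin (d + 1))) ×
        (Fin (w + 1) → ({x : Fin n // x ∉ T} → Fin (d + 1))))] at hco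
    · simpa [coeff_monomial] using hco
    · intro p _ hp
      rw [coeff_monomial, if_neg]
      intro h
      exact hp (monOf_injective h)
    · intro h
      exact absurd (Finset.mem_univ _) h
end

section
/- Let F be a field, S ⊆ F a finite set, f an n-variate polynomial over F of individual degree at most d, T ⊆ {1,…,n} with |T| = k, and w a nonnegative integer; assume S has at least d+1 elements. Draw tuples α_1,…,α_{w+1} ∈ S^k and β_1,…,β_{w+1} ∈ S^{n−k} with all coordinates independent and uniform on S, and let Ê be the (w+1)×(w+1) matrix with Ê[i,j] = f(x_T = α_i, x_{{1,…,n}∖T} = β_j). Then: (1) if rank(M_T(f)) ≤ w, then det(Ê) = 0 with probability 1; and (2) if rank(M_T(f)) > w, then the probability that det(Ê) = 0 is at most n·d·(w+1)²/|S|. -/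
open MvPolynomial

open Matrix

lemma grid_vanish_fin {F : Type*} [Field F] (S : Finset F) :
    ∀ (m : ℕ) (p : MvPolynomial (Fin m) F),
      (∀ i, p.degreeOf i < S.card) →
      (∀ x : Fin m → F, (∀ i, x i ∈ S) → eval x p = 0) → p = 0 := by
  intro m
  induction m with
  | zero =>
    intro p _ hev
    have h0 := hev (fun i => i.elim0) (fun i => i.elim0)
    rw [eq_C_of_isEmpty p] at h0 ⊢
    rw [eval_C] at h0
    rw [h0, map_zero]
  | succ m ih =>
    intro p hdeg hev
    have hq : ∀ i, (finSuccEquiv F m p).coeff i = 0 := by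
      intro i
      apply ih
      · intro j
        exact lt_of_le_of_lt (degreeOf_coeff_finSuccEquiv p j i) (hdeg j.succ)
      · intro t ht
        have key : Polynomial.map (eval t) (finSuccEquiv F m p) = 0 := by
          apply Polynomial.eq_zero_of_natDegree_lt_card_of_eval_eq_zero' _ S
          · intro y hy
            rw [← eval_eq_eval_mv_eval']
            exact hev (Fin.cons y t) (Fin.cases hy ht)
          · calc (Polynomial.map (eval t) (finSuccEquiv F m p)).natDegree
                ≤ (finSuccEquiv F m p).natDegree := Polynomial.natDegree_map_le
              _ = p.degreeOf 0 := natDegree_finSuccEquiv p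
              _ < S.card := hdeg 0
        have h2 := congrArg (fun P => Polynomial.coeff P i) key
        simp only [Polynomial.coeff_map, Polynomial.coeff_zero] at h2
        rw [← coeff_eval_eq_eval_coeff] at h2
        simpa [Polynomial.coeff_map] using h2
    have hz : finSuccEquiv F m p = 0 := Polynomial.ext fun i => by simp [hq i]
    have := (map_eq_zero_iff (finSuccEquiv F m) (AlgEquiv.injective _)).1 hz
    exact this

lemma grid_vanish {F : Type*} [Field F] (S : Finset F) {σ : Type*} [Fintype σ]
    (p : MvPolynomial σ F)
    (hdeg : ∀ i, p.degreeOf i < S.card)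
    (hev : ∀ x : σ → F, (∀ i, x i ∈ S) → eval x p = 0) : p = 0 := by
  classical
  let e := Fintype.equivFin σ
  have h := grid_vanish_fin S _ (rename e p) ?_ ?_
  · have hinj : Function.Injective (rename (R := F) e) := rename_injective _ e.injective
    rw [← map_zero (rename (R := F) e)] at h
    exact hinj h
  · intro j
    have h2 : degreeOf (e (e.symm j)) (rename e p) = degreeOf (e.symm j) p :=
      degreeOf_rename_of_injective e.injective _
    rw [e.apply_symm_apply] at h2
    rw [h2]; exact hdeg _
  · intro x hx
    rw [eval_rename]
    exact hev _ (fun i => hx _)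

lemma sz_count_fin {F : Type*} [Field F] [DecidableEq F] (S : Finset F) :
    ∀ (m : ℕ) (p : MvPolynomial (Fin m) F), p ≠ 0 →
      (Finset.univ.filter fun x : Fin m → {a // a ∈ S} =>
          eval (fun i => (x i : F)) p = 0).card * S.card
        ≤ p.totalDegree * S.card ^ m := by
  intro m
  induction m with
  | zero =>
    intro p hp
    have he : (Finset.univ.filter fun x : Fin 0 → {a // a ∈ S} =>
        eval (fun i => (x i : F)) p = 0) = ∅ := by
      apply Finset.filter_false_of_mem
      intro x _
      rw [eq_C_of_isEmpty p, eval_C]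
      intro h
      apply hp
      rw [eq_C_of_isEmpty p, h, map_zero]
    rw [he]
    simp
  | succ m ih =>
    intro p hp
    classical
    set q := finSuccEquiv F m p with hqdef
    have hq0 : q ≠ 0 := by
      simp only [hqdef, ne_eq, EmbeddingLike.map_eq_zero_iff]
      exact hp
    set K := q.natDegree with hK
    have hlead : q.coeff K ≠ 0 := by
      rw [← Polynomial.leadingCoeff]
      exact Polynomial.leadingCoeff_ne_zero.mpr hq0
    set Z := Finset.univ.filter fun x : Fin (m+1) → {a // a ∈ S} =>
      eval (fun i => (x i : F)) p = 0 with hZ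
    have hcard : Z.card = ∑ t : Fin m → {a // a ∈ S},
        (Z.filter fun x => Fin.tail x = t).card :=
      Finset.card_eq_sum_card_fiberwise (fun x _ => Finset.mem_univ _)
    have fiber_le : ∀ t : Fin m → {a // a ∈ S},
        (Z.filter fun x => Fin.tail x = t).card
        ≤ if eval (fun i => (t i : F)) (q.coeff K) = 0 then S.card else K := by
      intro t
      set P : Polynomial F := Polynomial.map (eval fun i => (t i : F)) q with hP
      have hmem : ∀ x ∈ Z.filter fun x => Fin.tail x = t,
          P.eval ((x 0 : F)) = 0 := by
        intro x hx
        rw [Finset.mem_filter] at hx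
        obtain ⟨hx1, hx2⟩ := hx
        rw [hZ, Finset.mem_filter] at hx1
        have hfun : (fun i => (x i : F)) = Fin.cons ((x 0 : F)) (fun i => (t i : F)) := by
          funext i
          refine Fin.cases rfl (fun j => ?_) i
          rw [Fin.cons_succ, ← hx2]
          rfl
        have := hx1.2
        rw [hfun, eval_eq_eval_mv_eval'] at this
        exact this
      have hinj : Set.InjOn (fun x : Fin (m+1) → {a // a ∈ S} => ((x 0 : F)))
          ↑(Z.filter fun x => Fin.tail x = t) := by
        intro x hx y hy hxy
        rw [Finset.mem_coe, Finset.mem_filter] at hx hy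
        funext i
        refine Fin.cases ?_ (fun j => ?_) i
        · exact Subtype.ext hxy
        · have := congrFun (hx.2.trans hy.2.symm) j
          exact this
      by_cases hc : eval (fun i => (t i : F)) (q.coeff K) = 0
      · rw [if_pos hc]
        calc (Z.filter fun x => Fin.tail x = t).card
            ≤ (Finset.univ : Finset {a // a ∈ S}).card :=
              Finset.card_le_card_of_injOn (fun x => x 0)
                (fun x _ => Finset.mem_univ _)
                (by intro x hx y hy hxy
                    rw [Finset.mem_coe, Finset.mem_filter] at hx hy
                    funext i
                    refine Fin.cases hxy (fun j => congrFun (hx.2.trans hy.2.symm) j) i)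
          _ = S.card := by simp
      · rw [if_neg hc]
        have hPne : P ≠ 0 := by
          intro h0
          apply hc
          have := congrArg (fun P => Polynomial.coeff P K) h0
          simpa [hP, Polynomial.coeff_map] using this
        calc (Z.filter fun x => Fin.tail x = t).card
            ≤ P.roots.toFinset.card := by
              apply Finset.card_le_card_of_injOn (fun x => ((x 0 : F))) _ hinj
              intro x hx
              rw [Finset.mem_coe, Multiset.mem_toFinset, Polynomial.mem_roots hPne]
              exact hmem x hx
          _ ≤ Multiset.card P.roots := Multiset.toFinset_card_le _
          _ ≤ P.natDegree := Polynomial.card_roots' P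
          _ ≤ K := Polynomial.natDegree_map_le
    -- sum the bounds
    set T0 := Finset.univ.filter fun t : Fin m → {a // a ∈ S} =>
      eval (fun i => (t i : F)) (q.coeff K) = 0 with hT0
    have hsum : Z.card ≤ T0.card * S.card + S.card ^ m * K := by
      rw [hcard]
      calc ∑ t : Fin m → {a // a ∈ S}, (Z.filter fun x => Fin.tail x = t).card
          ≤ ∑ t : Fin m → {a // a ∈ S},
            (if eval (fun i => (t i : F)) (q.coeff K) = 0 then S.card else K) :=
            Finset.sum_le_sum (fun t _ => fiber_le t)
        _ = T0.card * S.card + (Finset.univ.filter fun t : Fin m → {a // a ∈ S} =>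
              ¬ eval (fun i => (t i : F)) (q.coeff K) = 0).card * K := by
            rw [Finset.sum_ite, Finset.sum_const, Finset.sum_const, smul_eq_mul, smul_eq_mul, hT0]
        _ ≤ T0.card * S.card + S.card ^ m * K := by
            gcongr
            calc (Finset.univ.filter fun t : Fin m → {a // a ∈ S} =>
                ¬ eval (fun i => (t i : F)) (q.coeff K) = 0).card
                ≤ (Finset.univ : Finset (Fin m → {a // a ∈ S})).card := Finset.card_filter_le _ _
              _ = S.card ^ m := by
                  rw [Finset.card_univ, Fintype.card_fun]
                  simp
    have hIH : T0.card * S.card ≤ (q.coeff K).totalDegree * S.card ^ m := ih _ hlead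
    have hDK : (q.coeff K).totalDegree + K ≤ p.totalDegree :=
      totalDegree_coeff_finSuccEquiv_add_le p K hlead
    calc Z.card * S.card ≤ (T0.card * S.card + S.card ^ m * K) * S.card := by gcongr
      _ = T0.card * S.card * S.card + K * S.card ^ (m+1) := by ring
      _ ≤ (q.coeff K).totalDegree * S.card ^ m * S.card + K * S.card ^ (m+1) := by gcongr
      _ = ((q.coeff K).totalDegree + K) * S.card ^ (m+1) := by ring
      _ ≤ p.totalDegree * S.card ^ (m+1) := by gcongr

lemma rank_mul_eq_right {K : Type*} [Field K] {l m n : Type*} [Fintype l] [Fintype m] [Fintype n]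
    (A : Matrix l m K) (hA : ∀ v, A.mulVec v = 0 → v = 0) (B : Matrix m n K) :
    (A * B).rank = B.rank := by
  have hinj : Function.Injective A.mulVecLin := by
    rw [← LinearMap.ker_eq_bot, Matrix.ker_mulVecLin_eq_bot_iff]
    exact hA
  rw [Matrix.rank, Matrix.rank, Matrix.mulVecLin_mul, LinearMap.range_comp]
  exact (LinearEquiv.finrank_eq (Submodule.equivMapOfInjective _ hinj _)).symm

lemma exists_rows_li {K : Type*} [Field K] {m n : Type*} [Fintype m] [Fintype n]
    (A : Matrix m n K) {r : ℕ} (h : r ≤ A.rank) :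
    ∃ ri : Fin r → m, LinearIndependent K (fun i => A (ri i)) := by
  classical
  obtain ⟨b, hsub, hspan, hli⟩ := exists_linearIndependent K (Set.range A)
  have hbfin : b.Finite := (Set.finite_range A).subset hsub
  have : Fintype b := hbfin.fintype
  have hcard : r ≤ Fintype.card b := by
    calc r ≤ A.rank := h
      _ = Module.finrank K (Submodule.span K (Set.range A)) := Matrix.rank_eq_finrank_span_row A
      _ = Module.finrank K (Submodule.span K b) := by rw [hspan]
      _ = Fintype.card b := by rw [finrank_span_set_eq_card hli, Set.toFinset_card]
  let e := Fintype.equivFin b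
  let emb : Fin r → b := fun i => e.symm (Fin.castLE hcard i)
  have hembinj : Function.Injective emb :=
    e.symm.injective.comp (Fin.castLE_injective hcard)
  have hli2 : LinearIndependent K (fun i : Fin r => ((emb i : Set.Elem b) : n → K)) :=
    hli.comp emb hembinj
  have hch : ∀ i : Fin r, ∃ x, A x = ((emb i : Set.Elem b) : n → K) := fun i =>
    hsub (emb i).2
  refine ⟨fun i => (hch i).choose, ?_⟩
  have : (fun i => A ((hch i).choose)) = fun i : Fin r => ((emb i : Set.Elem b) : n → K) := by
    funext i
    exact (hch i).choose_spec
  rw [this]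
  exact hli2

lemma exists_submatrix_det_ne_zero {K : Type*} [Field K] {m n : Type*}
    [Fintype m] [Fintype n] (A : Matrix m n K) {r : ℕ} (h : r ≤ A.rank) :
    ∃ (ri : Fin r → m) (ci : Fin r → n), (A.submatrix ri ci).det ≠ 0 := by
  classical
  obtain ⟨ri, hri⟩ := exists_rows_li A h
  set B := A.submatrix ri id with hB
  have hrankB : r ≤ Bᵀ.rank := by
    rw [Matrix.rank_transpose, Matrix.rank_eq_finrank_span_row]
    have hrange : Set.range B.row = Set.range (fun i => A (ri i)) := rfl
    rw [hrange, finrank_span_eq_card hri, Fintype.card_fin]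
  obtain ⟨ci, hci⟩ := exists_rows_li Bᵀ hrankB
  refine ⟨ri, ci, ?_⟩
  have hU : IsUnit (Bᵀ.submatrix ci id) := by
    rw [← Matrix.linearIndependent_rows_iff_isUnit]
    exact hci
  have hdet : IsUnit (Bᵀ.submatrix ci id).det := (Matrix.isUnit_iff_isUnit_det _).1 hU
  have heq : (Bᵀ.submatrix ci id) = (A.submatrix ri ci)ᵀ := by
    ext i j
    rfl
  rw [heq, Matrix.det_transpose] at hdet
  exact hdet.ne_zero

lemma vandermonde_grid_inj {F : Type*} [Field F] (S : Finset F) {d : ℕ} (hS : d + 1 ≤ S.card)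
    {σ : Type*} [Fintype σ] [DecidableEq σ] (v : (σ → Fin (d+1)) → F)
    (h : ∀ α : σ → {a // a ∈ S},
      ∑ a : σ → Fin (d+1), v a * ∏ t, (α t : F) ^ ((a t : ℕ)) = 0) :
    ∀ a, v a = 0 := by
  classical
  set u : (σ → Fin (d+1)) → (σ →₀ ℕ) :=
    fun a => Finsupp.equivFunOnFinite.symm (fun t => (a t : ℕ)) with hu
  have huinj : Function.Injective u := by
    intro a a' hux
    have := congrArg Finsupp.equivFunOnFinite hux
    simp only [hu, Equiv.apply_symm_apply] at this
    funext t
    exact Fin.ext (congrFun this t)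
  have huapp : ∀ a t, u a t = (a t : ℕ) := fun a t => rfl
  set g : MvPolynomial σ F := ∑ a : σ → Fin (d+1), monomial (u a) (v a) with hg
  have hcoeff : ∀ a₀, coeff (u a₀) g = v a₀ := by
    intro a₀
    rw [hg, coeff_sum]
    rw [Finset.sum_eq_single a₀]
    · simp [coeff_monomial]
    · intro a _ hne
      rw [coeff_monomial, if_neg (fun hc => hne (huinj hc))]
    · intro hmem
      exact absurd (Finset.mem_univ a₀) hmem
  have hsupp : ∀ m ∈ g.support, ∃ a, m = u a := by
    intro m hm
    rw [mem_support_iff] at hm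
    by_contra hc
    push_neg at hc
    apply hm
    rw [hg, coeff_sum]
    apply Finset.sum_eq_zero
    intro a _
    rw [coeff_monomial, if_neg (fun he => hc a he.symm)]
  have hdeg : ∀ t, g.degreeOf t < S.card := by
    intro t
    apply lt_of_le_of_lt _ (lt_of_lt_of_le (Nat.lt_succ_self d) hS)
    rw [degreeOf_le_iff]
    intro m hm
    obtain ⟨a, rfl⟩ := hsupp m hm
    rw [huapp]
    exact Nat.lt_succ_iff.mp (a t).2
  have heval : ∀ x : σ → F, (∀ t, x t ∈ S) → eval x g = 0 := by
    intro x hx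
    rw [hg, map_sum]
    have := h (fun t => ⟨x t, hx t⟩)
    simpa [eval_monomial, Finsupp.prod_fintype, huapp] using this
  have hg0 : g = 0 := grid_vanish S g hdeg heval
  intro a
  rw [← hcoeff a, hg0, coeff_zero]

lemma eval_decomp {F : Type*} [Field F] {n d : ℕ} (T : Finset (Fin n))
    (f : MvPolynomial (Fin n) F) (hf : IndivDegLE f d) (x : Fin n → F) :
    eval x f = ∑ a : ({t : Fin n // t ∈ T} → Fin (d+1)),
      ∑ b : ({t : Fin n // t ∉ T} → Fin (d+1)),
      nisanMatrix d f T a b *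
        ((∏ t : {t : Fin n // t ∈ T}, x t ^ ((a t : ℕ)))
          * ∏ t : {t : Fin n // t ∉ T}, x t ^ ((b t : ℕ))) := by
  classical
  set u : ({t : Fin n // t ∈ T} → Fin (d+1)) → ({t : Fin n // t ∉ T} → Fin (d+1)) →
      (Fin n →₀ ℕ) := fun a b => Finsupp.equivFunOnFinite.symm
        (fun i => if h : i ∈ T then (a ⟨i, h⟩ : ℕ) else (b ⟨i, h⟩ : ℕ)) with hu
  have huapp : ∀ a b i, u a b i = if h : i ∈ T then (a ⟨i, h⟩ : ℕ) else (b ⟨i, h⟩ : ℕ) :=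
    fun a b i => rfl
  -- the monomial product splits
  have hprod : ∀ (a : ({t : Fin n // t ∈ T} → Fin (d+1)))
      (b : ({t : Fin n // t ∉ T} → Fin (d+1))),
      (∏ i : Fin n, x i ^ (u a b i)) =
        (∏ t : {t : Fin n // t ∈ T}, x t ^ ((a t : ℕ)))
          * ∏ t : {t : Fin n // t ∉ T}, x t ^ ((b t : ℕ)) := by
    intro a b
    rw [← Finset.prod_mul_prod_compl T (fun i => x i ^ (u a b i))]
    congr 1
    · rw [Finset.prod_subtype T (fun i => Iff.rfl) (fun i => x i ^ (u a b i))]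
      apply Finset.prod_congr rfl
      intro t _
      congr 1
      rw [huapp, dif_pos t.2]
    · rw [Finset.prod_subtype Tᶜ (fun i => Finset.mem_compl) (fun i => x i ^ (u a b i))]
      apply Finset.prod_congr rfl
      intro t _
      congr 1
      rw [huapp, dif_neg t.2]
  -- injectivity of u (uncurried)
  have huinj : Function.Injective (fun p : ({t : Fin n // t ∈ T} → Fin (d+1)) ×
      ({t : Fin n // t ∉ T} → Fin (d+1)) => u p.1 p.2) := by
    rintro ⟨a, b⟩ ⟨a', b'⟩ hab
    have h2 := congrArg Finsupp.equivFunOnFinite hab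
    simp only [hu, Equiv.apply_symm_apply] at h2
    have h3 : ∀ i, (if h : i ∈ T then (a ⟨i, h⟩ : ℕ) else (b ⟨i, h⟩ : ℕ)) =
        (if h : i ∈ T then (a' ⟨i, h⟩ : ℕ) else (b' ⟨i, h⟩ : ℕ)) := fun i => congrFun h2 i
    have ha : a = a' := by
      funext t
      have := h3 t.1
      rw [dif_pos t.2, dif_pos t.2] at this
      exact Fin.ext (by simpa using this)
    have hb : b = b' := by
      funext t
      have := h3 t.1
      rw [dif_neg t.2, dif_neg t.2] at this
      exact Fin.ext (by simpa using this)
    rw [Prod.mk.injEq]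
    exact ⟨ha, hb⟩
  -- support is inside the image of u
  have hsub : f.support ⊆ Finset.image (fun p : ({t : Fin n // t ∈ T} → Fin (d+1)) ×
      ({t : Fin n // t ∉ T} → Fin (d+1)) => u p.1 p.2) Finset.univ := by
    intro m hm
    rw [Finset.mem_image]
    refine ⟨⟨fun t => ⟨m t.1, Nat.lt_succ_iff.mpr (hf m hm t.1)⟩,
      fun t => ⟨m t.1, Nat.lt_succ_iff.mpr (hf m hm t.1)⟩⟩, Finset.mem_univ _, ?_⟩
    have : (fun i => if h : i ∈ T then ((⟨m i, Nat.lt_succ_iff.mpr (hf m hm i)⟩ : Fin (d+1)) : ℕ)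
        else ((⟨m i, Nat.lt_succ_iff.mpr (hf m hm i)⟩ : Fin (d+1)) : ℕ)) = ⇑m := by
      funext i
      by_cases h : i ∈ T <;> simp [h]
    simp only [hu]
    rw [show (fun i => if h : i ∈ T
        then (((fun t : {t : Fin n // t ∈ T} => (⟨m t.1, Nat.lt_succ_iff.mpr (hf m hm t.1)⟩ : Fin (d+1))) ⟨i, h⟩ : Fin (d+1)) : ℕ)
        else (((fun t : {t : Fin n // t ∉ T} => (⟨m t.1, Nat.lt_succ_iff.mpr (hf m hm t.1)⟩ : Fin (d+1))) ⟨i, h⟩ : Fin (d+1)) : ℕ)) = ⇑m from by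
      funext i; by_cases h : i ∈ T <;> simp [h]]
    exact Finsupp.equivFunOnFinite_symm_coe m
  -- now compute
  rw [eval_eq' x f]
  rw [Finset.sum_subset hsub (fun m _ hm' => by
    rw [notMem_support_iff.mp hm', zero_mul])]
  rw [Finset.sum_image (fun p _ q _ hpq => huinj hpq)]
  rw [Fintype.sum_prod_type]
  apply Finset.sum_congr rfl
  intro a _
  apply Finset.sum_congr rfl
  intro b _
  rw [hprod a b]
  rfl

noncomputable def detPoly {F : Type*} [Field F] {n : ℕ} (w : ℕ) (f : MvPolynomial (Fin n) F)
    (T : Finset (Fin n)) :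
    MvPolynomial ((Fin (w+1) × {x : Fin n // x ∈ T}) ⊕ (Fin (w+1) × {x : Fin n // x ∉ T})) F :=
  Matrix.det (Matrix.of fun i j : Fin (w+1) =>
    aeval (fun t : Fin n => if h : t ∈ T then X (Sum.inl (i, ⟨t, h⟩))
      else X (Sum.inr (j, ⟨t, h⟩))) f)

lemma aeval_self_eq_eval {F : Type*} [CommSemiring F] {V : Type*} (x : V → F)
    (p : MvPolynomial V F) : aeval x p = eval x p :=
  RingHom.congr_fun (coe_aeval_eq_eval x) p

lemma eval_detPoly {F : Type*} [Field F] {n : ℕ} (w : ℕ) (f : MvPolynomial (Fin n) F)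
    (T : Finset (Fin n))
    (x : (Fin (w+1) × {x : Fin n // x ∈ T}) ⊕ (Fin (w+1) × {x : Fin n // x ∉ T}) → F) :
    eval x (detPoly w f T) = Matrix.det (Matrix.of fun i j : Fin (w+1) =>
      eval (fun t : Fin n => if h : t ∈ T then x (Sum.inl (i, ⟨t, h⟩))
        else x (Sum.inr (j, ⟨t, h⟩))) f) := by
  rw [detPoly, RingHom.map_det (eval x)]
  congr 1
  ext i j
  show eval x (aeval _ f) = _
  rw [← aeval_self_eq_eval]
  rw [show (aeval x) ((aeval fun t : Fin n => if h : t ∈ T then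
      (X (Sum.inl (i, ⟨t, h⟩)) : MvPolynomial _ F) else X (Sum.inr (j, ⟨t, h⟩))) f)
    = ((aeval x).comp (aeval fun t : Fin n => if h : t ∈ T then
      (X (Sum.inl (i, ⟨t, h⟩)) : MvPolynomial _ F) else X (Sum.inr (j, ⟨t, h⟩)))) f from rfl]
  rw [comp_aeval]
  rw [aeval_self_eq_eval]
  rw [show (fun t : Fin n => (aeval x) (if h : t ∈ T then
      (X (Sum.inl (i, ⟨t, h⟩)) : MvPolynomial _ F) else X (Sum.inr (j, ⟨t, h⟩))))
    = (fun t : Fin n => if h : t ∈ T then x (Sum.inl (i, ⟨t, h⟩))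
      else x (Sum.inr (j, ⟨t, h⟩))) from by
    funext t
    by_cases h : t ∈ T <;> simp [h]]
  rfl

lemma totalDegree_aeval_le_of_deg_one {F : Type*} [CommSemiring F] {n d : ℕ} {V : Type*}
    (f : MvPolynomial (Fin n) F) (hf : IndivDegLE f d) (g : Fin n → MvPolynomial V F)
    (hg : ∀ t, (g t).totalDegree ≤ 1) :
    (aeval g f).totalDegree ≤ n * d := by
  conv_lhs => rw [← support_sum_monomial_coeff f]
  rw [map_sum]
  apply totalDegree_finsetSum_le
  intro m hm
  rw [aeval_monomial]
  apply le_trans (totalDegree_mul _ _)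
  have h1 : (algebraMap F (MvPolynomial V F) (coeff m f)).totalDegree = 0 := totalDegree_C _
  rw [h1, zero_add]
  rw [Finsupp.prod_fintype m _ (fun t => pow_zero _)]
  apply le_trans (totalDegree_finset_prod Finset.univ (fun t : Fin n => (g t) ^ m t))
  calc ∑ t : Fin n, ((g t) ^ m t).totalDegree
      ≤ ∑ _t : Fin n, d := by
        apply Finset.sum_le_sum
        intro t _
        apply le_trans (totalDegree_pow _ _)
        calc m t * (g t).totalDegree ≤ m t * 1 := Nat.mul_le_mul_left _ (hg t)
          _ = m t := Nat.mul_one _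
          _ ≤ d := hf m hm t
    _ = n * d := by simp [Finset.card_univ, mul_comm]

set_option maxHeartbeats 1000000 in
lemma totalDegree_detPoly_le {F : Type*} [Field F] {n d : ℕ} (w : ℕ)
    (f : MvPolynomial (Fin n) F) (hf : IndivDegLE f d) (T : Finset (Fin n)) :
    (detPoly w f T).totalDegree ≤ (w + 1) * (n * d) := by
  classical
  rw [detPoly, Matrix.det_apply]
  apply totalDegree_finsetSum_le
  intro σ _
  have hb : (∏ i : Fin (w+1), (Matrix.of fun i j : Fin (w+1) =>
      aeval (fun t : Fin n => if h : t ∈ T then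
        (X (Sum.inl (i, ⟨t, h⟩)) : MvPolynomial ((Fin (w+1) × {x : Fin n // x ∈ T})
          ⊕ (Fin (w+1) × {x : Fin n // x ∉ T})) F)
        else X (Sum.inr (j, ⟨t, h⟩))) f) (σ i) i).totalDegree ≤ (w + 1) * (n * d) := by
    apply le_trans (totalDegree_finset_prod _ _)
    calc ∑ i : Fin (w+1), ((Matrix.of fun i j : Fin (w+1) =>
          aeval (fun t : Fin n => if h : t ∈ T then
            (X (Sum.inl (i, ⟨t, h⟩)) : MvPolynomial ((Fin (w+1) × {x : Fin n // x ∈ T})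
              ⊕ (Fin (w+1) × {x : Fin n // x ∉ T})) F)
            else X (Sum.inr (j, ⟨t, h⟩))) f) (σ i) i).totalDegree
        ≤ ∑ _i : Fin (w+1), n * d := by
          apply Finset.sum_le_sum
          intro i _
          rw [Matrix.of_apply]
          apply totalDegree_aeval_le_of_deg_one f hf
          intro t
          by_cases h : t ∈ T <;> simp [h, totalDegree_X]
      _ = (w + 1) * (n * d) := by simp [Finset.card_univ, mul_comm]
  rcases Int.units_eq_one_or (Equiv.Perm.sign σ) with hs | hs <;> rw [hs]
  · rw [one_smul]
    exact hb
  · rw [Units.smul_def]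
    push_cast
    rw [neg_one_zsmul]
    rw [totalDegree_neg]
    exact hb

lemma sz_count {F : Type*} [Field F] (S : Finset F) {σ : Type*} [Fintype σ]
    (p : MvPolynomial σ F) (hp : p ≠ 0) :
    Nat.card {x : σ → {a // a ∈ S} // eval (fun i => (x i : F)) p = 0} * S.card
      ≤ p.totalDegree * S.card ^ Fintype.card σ := by
  classical
  set e := Fintype.equivFin σ with he
  have hren : rename e p ≠ 0 := by
    intro h
    apply hp
    have := rename_injective (R := F) e e.injective
    apply this
    rw [h, map_zero]
  have key : ∀ y : Fin (Fintype.card σ) → {a // a ∈ S},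
      eval (fun i => (y i : F)) (rename e p) = eval (fun s => (y (e s) : F)) p := by
    intro y
    rw [eval_rename]
    rfl
  have hequiv : {x : σ → {a // a ∈ S} // eval (fun i => (x i : F)) p = 0} ≃
      {y : Fin (Fintype.card σ) → {a // a ∈ S} //
        eval (fun i => (y i : F)) (rename e p) = 0} :=
    { toFun := fun x => ⟨x.1 ∘ e.symm, by
        rw [key]
        have hx := x.2
        rw [show (fun s => (((x.1 ∘ e.symm) (e s) : {a // a ∈ S}) : F)) = fun i => ((x.1 i : {a // a ∈ S}) : F) from by
          funext s; simp]
        exact hx⟩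
      invFun := fun y => ⟨y.1 ∘ e, by
        have hy := y.2
        rw [key] at hy
        exact hy⟩
      left_inv := fun x => by
        apply Subtype.ext
        funext s
        simp
      right_inv := fun y => by
        apply Subtype.ext
        funext i
        simp }
  rw [Nat.card_congr hequiv, Nat.card_eq_fintype_card, Fintype.card_subtype]
  calc (Finset.univ.filter fun y : Fin (Fintype.card σ) → {a // a ∈ S} =>
        eval (fun i => (y i : F)) (rename e p) = 0).card * S.card
      ≤ (rename e p).totalDegree * S.card ^ (Fintype.card σ) :=
        sz_count_fin S (Fintype.card σ) (rename e p) hren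
    _ ≤ p.totalDegree * S.card ^ (Fintype.card σ) := by
        gcongr
        exact totalDegree_rename_le e p

lemma matfact {F : Type*} [CommRing F] {ι κ ra ca : Type*} [Fintype ra] [Fintype ca]
    (M : Matrix ra ca F) (R : Matrix ι ra F) (C : Matrix ca κ F) (i : ι) (j : κ) :
    ∑ a : ra, ∑ b : ca, M a b * (R i a * C b j) = (R * (M * C)) i j := by
  rw [Matrix.mul_apply]
  simp_rw [Matrix.mul_apply, Finset.mul_sum]
  apply Finset.sum_congr rfl
  intro a _
  apply Finset.sum_congr rfl
  intro b _
  ring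

lemma eval_split {F : Type*} [Field F] {n d : ℕ} (T : Finset (Fin n))
    (f : MvPolynomial (Fin n) F) (hf : IndivDegLE f d)
    (α : {x : Fin n // x ∈ T} → F) (β : {x : Fin n // x ∉ T} → F) :
    eval (fun t => if h : t ∈ T then α ⟨t, h⟩ else β ⟨t, h⟩) f
      = ∑ a : ({x : Fin n // x ∈ T} → Fin (d+1)), ∑ b : ({x : Fin n // x ∉ T} → Fin (d+1)),
          nisanMatrix d f T a b *
            ((∏ t, α t ^ ((a t : ℕ))) * ∏ t, β t ^ ((b t : ℕ))) := by
  rw [eval_decomp T f hf]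
  apply Finset.sum_congr rfl
  intro a _
  apply Finset.sum_congr rfl
  intro b _
  congr 2
  · apply Finset.prod_congr rfl
    intro t _
    rw [dif_pos t.2]
  · apply Finset.prod_congr rfl
    intro t _
    rw [dif_neg t.2]

/-- **Estimating Nisan rank using PIT.** Draw `w + 1` random row-tuples `α_i ∈ S^T` and `w + 1`
random column-tuples `β_j ∈ S^{[n]∖T}` (all coordinates independent and uniform on the finite set
`S`, `|S| ≥ d + 1`), and let `Ê[i,j] = f(x_T = α_i, x_{[n]∖T} = β_j)`.
(1) If `rank M_T(f) ≤ w`, then `det Ê = 0` with probability `1` (i.e. always); and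
(2) if `rank M_T(f) > w`, then `Pr[det Ê = 0] ≤ n·d·(w+1)²/|S|`. -/
theorem rank_estimation_from_PIT {F : Type*} [Field F] {n d w : ℕ}
    (S : Finset F) (hS : d + 1 ≤ S.card)
    (f : MvPolynomial (Fin n) F) (hf : IndivDegLE f d) (T : Finset (Fin n)) :
    ((nisanMatrix d f T).rank ≤ w →
      ∀ ω : (Fin (w + 1) → {x : Fin n // x ∈ T} → {a // a ∈ S}) ×
            (Fin (w + 1) → {x : Fin n // x ∉ T} → {a // a ∈ S}),
        Matrix.det (Matrix.of fun i j : Fin (w + 1) =>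
          MvPolynomial.eval
            (fun t => if h : t ∈ T then (ω.1 i ⟨t, h⟩ : F) else (ω.2 j ⟨t, h⟩ : F)) f) = 0) ∧
    (w < (nisanMatrix d f T).rank →
      (Nat.card {ω : (Fin (w + 1) → {x : Fin n // x ∈ T} → {a // a ∈ S}) ×
            (Fin (w + 1) → {x : Fin n // x ∉ T} → {a // a ∈ S}) //
          Matrix.det (Matrix.of fun i j : Fin (w + 1) =>
            MvPolynomial.eval
              (fun t => if h : t ∈ T then (ω.1 i ⟨t, h⟩ : F) else (ω.2 j ⟨t, h⟩ : F)) f) = 0} : ℝ)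
        / (Nat.card ((Fin (w + 1) → {x : Fin n // x ∈ T} → {a // a ∈ S}) ×
            (Fin (w + 1) → {x : Fin n // x ∉ T} → {a // a ∈ S})) : ℝ)
        ≤ (n * d * (w + 1) ^ 2 : ℝ) / (S.card : ℝ)) := by
  classical
  constructor
  · -- Part 1
    intro hrank ω
    set M := nisanMatrix d f T with hM
    set R : Matrix (Fin (w+1)) ({x : Fin n // x ∈ T} → Fin (d+1)) F :=
      Matrix.of fun i a => ∏ t, ((ω.1 i t : F)) ^ ((a t : ℕ)) with hR
    set C : Matrix ({x : Fin n // x ∉ T} → Fin (d+1)) (Fin (w+1)) F :=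
      Matrix.of fun b j => ∏ t, ((ω.2 j t : F)) ^ ((b t : ℕ)) with hC
    have hfact : (Matrix.of fun i j : Fin (w + 1) =>
        MvPolynomial.eval
          (fun t => if h : t ∈ T then (ω.1 i ⟨t, h⟩ : F) else (ω.2 j ⟨t, h⟩ : F)) f)
        = R * (M * C) := by
      ext i j
      exact (eval_split T f hf (fun u => ((ω.1 i u : F))) (fun u => ((ω.2 j u : F)))).trans
        (matfact M R C i j)
    rw [hfact]
    by_contra hdet
    have hunit : IsUnit (R * (M * C)) :=
      (Matrix.isUnit_iff_isUnit_det _).2 (isUnit_iff_ne_zero.2 hdet)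
    have h1 : (R * (M * C)).rank = w + 1 := by
      rw [Matrix.rank_of_isUnit _ hunit, Fintype.card_fin]
    have h2 : (R * (M * C)).rank ≤ M.rank :=
      le_trans (Matrix.rank_mul_le_right R (M * C)) (Matrix.rank_mul_le_left M C)
    omega
  · -- Part 2
    intro hrank
    set M := nisanMatrix d f T with hM
    set Rh : Matrix ({x : Fin n // x ∈ T} → {a // a ∈ S})
        ({x : Fin n // x ∈ T} → Fin (d+1)) F :=
      Matrix.of fun α a => ∏ t, ((α t : F)) ^ ((a t : ℕ)) with hRh
    set Ch : Matrix ({x : Fin n // x ∉ T} → Fin (d+1))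
        ({x : Fin n // x ∉ T} → {a // a ∈ S}) F :=
      Matrix.of fun b β => ∏ t, ((β t : F)) ^ ((b t : ℕ)) with hCh
    have hRker : ∀ v, Rh.mulVec v = 0 → v = 0 := by
      intro v hv
      funext a
      refine vandermonde_grid_inj S hS v ?_ a
      intro α
      have h0 : Rh.mulVec v α = 0 := by rw [hv]; rfl
      calc ∑ a, v a * ∏ t, ((α t : F)) ^ ((a t : ℕ))
          = ∑ a, Rh α a * v a := by
            apply Finset.sum_congr rfl
            intro a _
            rw [mul_comm]
            rfl
        _ = 0 := h0
    have hCker : ∀ v, Chᵀ.mulVec v = 0 → v = 0 := by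
      intro v hv
      funext b
      refine vandermonde_grid_inj S hS v ?_ b
      intro β
      have h0 : Chᵀ.mulVec v β = 0 := by rw [hv]; rfl
      calc ∑ b, v b * ∏ t, ((β t : F)) ^ ((b t : ℕ))
          = ∑ b, Chᵀ β b * v b := by
            apply Finset.sum_congr rfl
            intro b _
            rw [mul_comm]
            rfl
        _ = 0 := h0
    have hMC : (M * Ch).rank = M.rank := by
      rw [← Matrix.rank_transpose (M * Ch), Matrix.transpose_mul,
        rank_mul_eq_right Chᵀ hCker Mᵀ, Matrix.rank_transpose]
    have hrankG : w + 1 ≤ (Rh * (M * Ch)).rank := by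
      rw [rank_mul_eq_right Rh hRker (M * Ch), hMC]
      omega
    obtain ⟨ri, ci, hdet⟩ := exists_submatrix_det_ne_zero _ hrankG
    have hsubm : ((Rh * (M * Ch)).submatrix ri ci) = Matrix.of (fun i j : Fin (w+1) =>
        MvPolynomial.eval
          (fun t => if h : t ∈ T then ((ri i ⟨t, h⟩ : F)) else ((ci j ⟨t, h⟩ : F))) f) := by
      ext i j
      exact ((eval_split T f hf (fun u => ((ri i u : F))) (fun u => ((ci j u : F)))).trans
        (matfact M Rh Ch (ri i) (ci j))).symm
    have hPne : detPoly w f T ≠ 0 := by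
      intro h0
      apply hdet
      have hev := eval_detPoly w f T
        (Sum.elim (fun p => ((ri p.1 p.2 : F))) (fun p => ((ci p.1 p.2 : F))))
      rw [h0, map_zero] at hev
      rw [hsubm]
      exact hev.symm
    -- counting
    have hdlt : 0 < S.card := lt_of_lt_of_le (Nat.succ_pos d) hS
    set eΩ : ((Fin (w + 1) → {x : Fin n // x ∈ T} → {a // a ∈ S}) ×
        (Fin (w + 1) → {x : Fin n // x ∉ T} → {a // a ∈ S})) ≃
        (((Fin (w+1) × {x : Fin n // x ∈ T}) ⊕ (Fin (w+1) × {x : Fin n // x ∉ T}))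
          → {a // a ∈ S}) :=
      { toFun := fun ω => Sum.elim (fun p => ω.1 p.1 p.2) (fun p => ω.2 p.1 p.2)
        invFun := fun x => (fun i t => x (Sum.inl (i, t)), fun j t => x (Sum.inr (j, t)))
        left_inv := fun ω => rfl
        right_inv := fun x => by funext v; cases v <;> rfl } with heΩ
    have hcond : ∀ ω : (Fin (w + 1) → {x : Fin n // x ∈ T} → {a // a ∈ S}) ×
        (Fin (w + 1) → {x : Fin n // x ∉ T} → {a // a ∈ S}),
        (Matrix.det (Matrix.of fun i j : Fin (w + 1) =>
          MvPolynomial.eval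
            (fun t => if h : t ∈ T then (ω.1 i ⟨t, h⟩ : F) else (ω.2 j ⟨t, h⟩ : F)) f) = 0)
        ↔ eval (fun v => ((eΩ ω v : F))) (detPoly w f T) = 0 := by
      intro ω
      rw [eval_detPoly]
      exact Iff.rfl
    have hN : Nat.card {ω : (Fin (w + 1) → {x : Fin n // x ∈ T} → {a // a ∈ S}) ×
            (Fin (w + 1) → {x : Fin n // x ∉ T} → {a // a ∈ S}) //
          Matrix.det (Matrix.of fun i j : Fin (w + 1) =>
            MvPolynomial.eval
              (fun t => if h : t ∈ T then (ω.1 i ⟨t, h⟩ : F) else (ω.2 j ⟨t, h⟩ : F)) f) = 0}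
        = Nat.card {x : ((Fin (w+1) × {x : Fin n // x ∈ T})
              ⊕ (Fin (w+1) × {x : Fin n // x ∉ T})) → {a // a ∈ S} //
            eval (fun v => ((x v : F))) (detPoly w f T) = 0} :=
      Nat.card_congr (Equiv.subtypeEquiv eΩ hcond)
    have hΩ : Nat.card ((Fin (w + 1) → {x : Fin n // x ∈ T} → {a // a ∈ S}) ×
            (Fin (w + 1) → {x : Fin n // x ∉ T} → {a // a ∈ S}))
        = S.card ^ (Fintype.card ((Fin (w+1) × {x : Fin n // x ∈ T})
            ⊕ (Fin (w+1) × {x : Fin n // x ∉ T}))) := by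
      rw [Nat.card_congr eΩ, Nat.card_eq_fintype_card, Fintype.card_fun, Fintype.card_coe]
    have hsz := sz_count S (detPoly w f T) hPne
    have hdeg := totalDegree_detPoly_le (d := d) w f hf T
    rw [hN, hΩ]
    set m := Fintype.card ((Fin (w+1) × {x : Fin n // x ∈ T})
        ⊕ (Fin (w+1) × {x : Fin n // x ∉ T})) with hm
    set N := Nat.card {x : ((Fin (w+1) × {x : Fin n // x ∈ T})
          ⊕ (Fin (w+1) × {x : Fin n // x ∉ T})) → {a // a ∈ S} //
        eval (fun v => ((x v : F))) (detPoly w f T) = 0} with hNdef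
    have hkey : N * S.card ≤ (n * d * (w+1)^2) * S.card ^ m := by
      calc N * S.card ≤ (detPoly w f T).totalDegree * S.card ^ m := hsz
        _ ≤ ((w + 1) * (n * d)) * S.card ^ m := by gcongr
        _ ≤ (n * d * (w+1)^2) * S.card ^ m := by
            have : (w + 1) * (n * d) ≤ n * d * (w+1)^2 := by nlinarith
            exact Nat.mul_le_mul_right _ this
    rw [div_le_div_iff₀ (by positivity) (by positivity)]
    have hkeyR : (N : ℝ) * (S.card : ℝ) ≤ ((n * d * (w+1)^2 : ℕ) : ℝ) * ((S.card ^ m : ℕ) : ℝ) := by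
      exact_mod_cast hkey
    push_cast at hkeyR ⊢
    linarith
end
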